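/- arXiv:2501.05968 — 7 statements merged into one kernel-verified Lean document; each statement's English description precedes it below -/
import Mathlib

section
/- Let P = u₁u₂…u_n be an oriented path and let v₁,…,v_k be vertices not on P, each adjacent (in the ambient oriented graph) to every vertex u_j of P. If n ≥ k + 2, then there exists an oriented path P′ obtained from P by inserting each v_i between some consecutive pair u_{a_i}, u_{a_i+1} (with all a_i distinct) such that σ⁺(P′) ≥ σ⁺(P). -/
/-- A digraph given by the arc relation `A` is an oriented graph: no loops and at most
one arc between any two vertices. -/
def IsOriented {V : Type*} (A : V → V → Prop) : Prop :=
  ∀ u v, A u v → u ≠ v ∧ ¬ A v u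

/-- The degree of `v` in the underlying graph of the digraph `A`. -/
noncomputable def deg {V : Type*} [Fintype V] (A : V → V → Prop) (v : V) : ℕ :=
  Nat.card {u : V // A v u ∨ A u v}

/-- `e` lists the vertices of a Hamilton oriented cycle of the digraph `A`:
consecutive vertices are joined by an arc in one of the two directions. -/
def IsHamOrientedCycle {V : Type*} [Fintype V] (A : V → V → Prop)
    (e : ZMod (Fintype.card V) ≃ V) : Prop :=
  ∀ i, A (e i) (e (i + 1)) ∨ A (e (i + 1)) (e i)

/-- The number of forward arcs of the oriented cycle listed by `e`. -/
noncomputable def sigmaPlus {V : Type*} [Fintype V] (A : V → V → Prop)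
    (e : ZMod (Fintype.card V) ≃ V) : ℕ :=
  Nat.card {i : ZMod (Fintype.card V) // A (e i) (e (i + 1))}

/-- The number of backward arcs of the oriented cycle listed by `e`. -/
noncomputable def sigmaMinus {V : Type*} [Fintype V] (A : V → V → Prop)
    (e : ZMod (Fintype.card V) ≃ V) : ℕ :=
  Nat.card {i : ZMod (Fintype.card V) // A (e (i + 1)) (e i)}

/-- `σ_max` of the oriented cycle listed by `e`. -/
noncomputable def sigmaMax {V : Type*} [Fintype V] (A : V → V → Prop)
    (e : ZMod (Fintype.card V) ≃ V) : ℕ :=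
  max (sigmaPlus A e) (sigmaMinus A e)

/-- The number of forward arcs of the oriented path listed by `l`. -/
noncomputable def listForward {V : Type*} (A : V → V → Prop) (l : List V) : ℕ :=
  (l.zip l.tail).countP fun p => @decide (A p.1 p.2) (Classical.propDecidable _)

section Aux
open Classical
variable {V : Type*} {A : V → V → Prop}

lemma listForward_cc (A : V → V → Prop) (a b : V) (l : List V) :
    listForward A (a :: b :: l) = (if A a b then 1 else 0) + listForward A (b :: l) := by
  unfold listForward
  simp only [List.tail_cons, List.zip_cons_cons, List.countP_cons]
  by_cases h : A a b <;> simp [h, Nat.add_comm]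

/-- invariant for the insertion construction -/
def Ins (A : V → V → Prop) (l vs l' : List V) : Prop :=
  (l'.Chain' fun u v => A u v ∨ A v u) ∧ l.Sublist l' ∧ l'.Perm (l ++ vs) ∧
  l'.head? = l.head? ∧ l'.getLast? = l.getLast? ∧
  ∀ p ∈ l'.zip l'.tail, p.1 ∈ l ∨ p.2 ∈ l

lemma ins_refl (l : List V) (hc : l.Chain' fun u v => A u v ∨ A v u) :
    Ins A l [] l := by
  refine ⟨hc, List.Sublist.refl l, by simp, rfl, rfl, ?_⟩
  · intro p hp
    exact Or.inl (List.of_mem_zip hp).1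

lemma ins_skip (a b : V) (rest M vs : List V)
    (harc : A a b ∨ A b a)
    (h : Ins A (b :: rest) vs (b :: M)) :
    Ins A (a :: b :: rest) vs (a :: b :: M) := by
  obtain ⟨hc, hs, hp, hh, hl, hz⟩ := h
  refine ⟨List.IsChain.cons_cons harc hc, hs.cons₂ a, ?_, rfl, ?_, ?_⟩
  · simpa using hp.cons a
  · rw [List.getLast?_cons_cons, List.getLast?_cons_cons]
    exact hl
  · intro p hp
    simp only [List.tail_cons, List.zip_cons_cons, List.mem_cons] at hp
    rcases hp with rfl | hp
    · exact Or.inl (by simp)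
    · rcases hz p (by simpa using hp) with h1 | h1
      · exact Or.inl (List.mem_cons_of_mem a h1)
      · exact Or.inr (List.mem_cons_of_mem a h1)

lemma ins_insert (a v b : V) (rest M vs vs' : List V)
    (harc1 : A a v ∨ A v a) (harc2 : A v b ∨ A b v)
    (hperm : vs.Perm (v :: vs'))
    (h : Ins A (b :: rest) vs' (b :: M)) :
    Ins A (a :: b :: rest) vs (a :: v :: b :: M) := by
  obtain ⟨hc, hs, hp, hh, hl, hz⟩ := h
  refine ⟨List.IsChain.cons_cons harc1 (List.IsChain.cons_cons harc2 hc), hs.cons v |>.cons₂ a, ?_, rfl, ?_, ?_⟩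
  · have h1 : (v :: b :: M).Perm (v :: (b :: rest) ++ vs') := (hp.cons v).trans (by simp)
    have h2 : (v :: ((b :: rest) ++ vs')).Perm ((b :: rest) ++ v :: vs') :=
      List.perm_middle.symm
    have h3 : ((b :: rest) ++ v :: vs').Perm ((b :: rest) ++ vs) :=
      (hperm.symm).append_left (b :: rest)
    simpa using ((h1.trans h2).trans h3).cons a
  · rw [List.getLast?_cons_cons, List.getLast?_cons_cons, List.getLast?_cons_cons]
    exact hl
  · intro p hp
    simp only [List.tail_cons, List.zip_cons_cons, List.mem_cons] at hp
    rcases hp with rfl | rfl | hp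
    · exact Or.inl (by simp)
    · exact Or.inr (by simp)
    · rcases hz p (by simpa using hp) with h1 | h1
      · exact Or.inl (List.mem_cons_of_mem a h1)
      · exact Or.inr (List.mem_cons_of_mem a h1)

end Aux

section Core
open Classical
variable {V : Type*} {A : V → V → Prop}

lemma ins_dest {b : V} {rest vs' l' : List V} (h : Ins A (b :: rest) vs' l') :
    ∃ M, l' = b :: M := by
  have hh := h.2.2.2.1
  cases l' with
  | nil => simp at hh
  | cons x M =>
    simp only [List.head?_cons, Option.some.injEq] at hh
    exact ⟨M, by rw [hh]⟩

lemma ite_le_one' {p : Prop} [Decidable p] : (if p then (1:ℕ) else 0) ≤ 1 := by split <;> omega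

lemma core (hA : IsOriented A) :
    ∀ (n : ℕ) (l : List V), l.length ≤ n → (l.Chain' fun u v => A u v ∨ A v u) →
      ∀ vs : List V, (∀ v ∈ vs, ∀ u ∈ l, A v u ∨ A u v) →
      ((vs.length + 1 ≤ l.length →
          ∃ l', Ins A l vs l' ∧ listForward A l ≤ listForward A l' + 1) ∧
       (vs.length + 1 ≤ l.length → (∀ v ∈ vs, ∀ u ∈ l.head?, A u v) →
          ∃ l', Ins A l vs l' ∧ listForward A l ≤ listForward A l') ∧
       (vs.length + 2 ≤ l.length →
          ∃ l', Ins A l vs l' ∧ listForward A l ≤ listForward A l')) := by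
  intro n
  induction n with
  | zero =>
    intro l hl _ vs _
    have hl0 : l.length = 0 := Nat.le_zero.mp hl
    exact ⟨fun h => absurd h (by omega), fun h => absurd h (by omega),
      fun h => absurd h (by omega)⟩
  | succ n IH =>
    intro l hlen hchain vs hadj
    rcases vs with _ | ⟨v₀, vt⟩
    · exact ⟨fun _ => ⟨l, ins_refl l hchain, by omega⟩,
        fun _ _ => ⟨l, ins_refl l hchain, le_refl _⟩,
        fun _ => ⟨l, ins_refl l hchain, le_refl _⟩⟩
    set vs := v₀ :: vt with hvs
    have hvslen : 1 ≤ vs.length := by simp [hvs]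
    -- helper to destructure l once length ≥ 2 is known
    refine ⟨?_, ?_, ?_⟩
    all_goals intro hlen1
    rotate_left
    · -- Part L' (precondition version) : needs extra intro
      intro hpre
      obtain ⟨a, b, rest, rfl⟩ : ∃ a b rest, l = a :: b :: rest := by
        rcases l with _ | ⟨a, _ | ⟨b, rest⟩⟩
        · simp only [List.length_nil] at hlen1; omega
        · simp only [List.length_cons, List.length_nil] at hlen1; omega
        · exact ⟨a, b, rest, rfl⟩
      have harc_ab : A a b ∨ A b a := (List.isChain_cons_cons.mp hchain).1
      have hchainT : (b :: rest).Chain' fun u v => A u v ∨ A v u := hchain.tail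
      have hlenT : (b :: rest).length ≤ n := by simpa using hlen
      have hpre' : ∀ v ∈ vs, A a v := fun v hv => hpre v hv a rfl
      by_cases h2 : ∃ v ∈ vs, A v b
      · obtain ⟨v, hv, hvb⟩ := h2
        have hadjE : ∀ w ∈ vs.erase v, ∀ u ∈ b :: rest, A w u ∨ A u w := fun w hw u hu =>
          hadj w (List.mem_of_mem_erase hw) u (List.mem_cons_of_mem a hu)
        have hElen : (vs.erase v).length + 1 ≤ (b :: rest).length := by
          rw [List.length_erase_of_mem hv]
          simp only [List.length_cons] at hlen1 ⊢
          omega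
        obtain ⟨L', hins, hcnt⟩ := (IH (b :: rest) hlenT hchainT (vs.erase v) hadjE).1 hElen
        obtain ⟨M, rfl⟩ := ins_dest hins
        refine ⟨a :: v :: b :: M, ins_insert a v b rest M vs (vs.erase v)
          ((hadj v hv a (by simp)).symm) (hadj v hv b (by simp))
          (List.perm_cons_erase hv) hins, ?_⟩
        have e1 := listForward_cc A a b rest
        have e2 := listForward_cc A a v (b :: M)
        have e3 := listForward_cc A v b M
        have h4 : (if A a v then 1 else 0) = 1 := by simp [hpre' v hv]
        have h5 : (if A v b then 1 else 0) = 1 := by simp [hvb]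
        have h6 : (if A a b then 1 else 0) ≤ 1 := ite_le_one'
        omega
      · push_neg at h2
        have hbv : ∀ v ∈ vs, A b v := fun v hv => by
          rcases hadj v hv b (by simp) with h | h
          · exact absurd h (h2 v hv)
          · exact h
        have hadjE : ∀ w ∈ vs.erase v₀, ∀ u ∈ b :: rest, A w u ∨ A u w := fun w hw u hu =>
          hadj w (List.mem_of_mem_erase hw) u (List.mem_cons_of_mem a hu)
        have hElen : (vs.erase v₀).length + 1 ≤ (b :: rest).length := by
          rw [List.length_erase_of_mem (by simp [hvs])]
          simp only [List.length_cons] at hlen1 ⊢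
          omega
        have hpreE : ∀ w ∈ vs.erase v₀, ∀ u ∈ (b :: rest).head?, A u w := by
          intro w hw u hu
          simp only [List.head?_cons, Option.mem_def, Option.some.injEq] at hu
          subst hu
          exact hbv w (List.mem_of_mem_erase hw)
        obtain ⟨L', hins, hcnt⟩ :=
          (IH (b :: rest) hlenT hchainT (vs.erase v₀) hadjE).2.1 hElen hpreE
        obtain ⟨M, rfl⟩ := ins_dest hins
        have hv₀ : v₀ ∈ vs := by simp [hvs]
        refine ⟨a :: v₀ :: b :: M, ins_insert a v₀ b rest M vs (vs.erase v₀)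
          ((hadj v₀ hv₀ a (by simp)).symm) (hadj v₀ hv₀ b (by simp))
          (List.perm_cons_erase hv₀) hins, ?_⟩
        have e1 := listForward_cc A a b rest
        have e2 := listForward_cc A a v₀ (b :: M)
        have e3 := listForward_cc A v₀ b M
        have h4 : (if A a v₀ then 1 else 0) = 1 := by simp [hpre' v₀ hv₀]
        have h6 : (if A a b then 1 else 0) ≤ 1 := ite_le_one'
        omega
    · -- Part MAIN
      obtain ⟨a, b, rest, rfl⟩ : ∃ a b rest, l = a :: b :: rest := by
        rcases l with _ | ⟨a, _ | ⟨b, rest⟩⟩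
        · simp only [List.length_nil] at hlen1; omega
        · simp only [List.length_cons, List.length_nil] at hlen1; omega
        · exact ⟨a, b, rest, rfl⟩
      have harc_ab : A a b ∨ A b a := (List.isChain_cons_cons.mp hchain).1
      have hchainT : (b :: rest).Chain' fun u v => A u v ∨ A v u := hchain.tail
      have hlenT : (b :: rest).length ≤ n := by simpa using hlen
      by_cases hgood : ∃ v ∈ vs, A a b → A a v ∨ A v b
      · obtain ⟨v, hv, himp⟩ := hgood
        have hadjE : ∀ w ∈ vs.erase v, ∀ u ∈ b :: rest, A w u ∨ A u w := fun w hw u hu =>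
          hadj w (List.mem_of_mem_erase hw) u (List.mem_cons_of_mem a hu)
        have hElen : (vs.erase v).length + 2 ≤ (b :: rest).length := by
          rw [List.length_erase_of_mem hv]
          simp only [List.length_cons] at hlen1 ⊢
          omega
        obtain ⟨L', hins, hcnt⟩ := (IH (b :: rest) hlenT hchainT (vs.erase v) hadjE).2.2 hElen
        obtain ⟨M, rfl⟩ := ins_dest hins
        refine ⟨a :: v :: b :: M, ins_insert a v b rest M vs (vs.erase v)
          ((hadj v hv a (by simp)).symm) (hadj v hv b (by simp))
          (List.perm_cons_erase hv) hins, ?_⟩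
        have e1 := listForward_cc A a b rest
        have e2 := listForward_cc A a v (b :: M)
        have e3 := listForward_cc A v b M
        have h6 : (if A a b then 1 else 0) ≤
            (if A a v then 1 else 0) + (if A v b then (1:ℕ) else 0) := by
          by_cases hab : A a b
          · rcases himp hab with h | h <;> simp [hab, h]
          · simp [hab]
        omega
      · push_neg at hgood
        have hbv : ∀ v ∈ vs, A b v := fun v hv => by
          rcases hadj v hv b (by simp) with h | h
          · exact absurd h (hgood v hv).2.2
          · exact h
        have hadjT : ∀ w ∈ vs, ∀ u ∈ b :: rest, A w u ∨ A u w := fun w hw u hu =>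
          hadj w hw u (List.mem_cons_of_mem a hu)
        have hpreT : ∀ w ∈ vs, ∀ u ∈ (b :: rest).head?, A u w := by
          intro w hw u hu
          simp only [List.head?_cons, Option.mem_def, Option.some.injEq] at hu
          subst hu
          exact hbv w hw
        have hTlen : vs.length + 1 ≤ (b :: rest).length := by
          simp only [List.length_cons] at hlen1 ⊢
          omega
        obtain ⟨L', hins, hcnt⟩ := (IH (b :: rest) hlenT hchainT vs hadjT).2.1 hTlen hpreT
        obtain ⟨M, rfl⟩ := ins_dest hins
        refine ⟨a :: b :: M, ins_skip a b rest M vs harc_ab hins, ?_⟩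
        have e1 := listForward_cc A a b rest
        have e2 := listForward_cc A a b M
        omega
    · -- Part L**
      obtain ⟨a, b, rest, rfl⟩ : ∃ a b rest, l = a :: b :: rest := by
        rcases l with _ | ⟨a, _ | ⟨b, rest⟩⟩
        · simp only [List.length_nil] at hlen1; omega
        · simp only [List.length_cons, List.length_nil] at hlen1; omega
        · exact ⟨a, b, rest, rfl⟩
      have harc_ab : A a b ∨ A b a := (List.isChain_cons_cons.mp hchain).1
      have hchainT : (b :: rest).Chain' fun u v => A u v ∨ A v u := hchain.tail
      have hlenT : (b :: rest).length ≤ n := by simpa using hlen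
      by_cases hgood : ∃ v ∈ vs, A a b → A a v ∨ A v b
      · obtain ⟨v, hv, himp⟩ := hgood
        have hadjE : ∀ w ∈ vs.erase v, ∀ u ∈ b :: rest, A w u ∨ A u w := fun w hw u hu =>
          hadj w (List.mem_of_mem_erase hw) u (List.mem_cons_of_mem a hu)
        have hElen : (vs.erase v).length + 1 ≤ (b :: rest).length := by
          rw [List.length_erase_of_mem hv]
          simp only [List.length_cons] at hlen1 ⊢
          omega
        obtain ⟨L', hins, hcnt⟩ := (IH (b :: rest) hlenT hchainT (vs.erase v) hadjE).1 hElen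
        obtain ⟨M, rfl⟩ := ins_dest hins
        refine ⟨a :: v :: b :: M, ins_insert a v b rest M vs (vs.erase v)
          ((hadj v hv a (by simp)).symm) (hadj v hv b (by simp))
          (List.perm_cons_erase hv) hins, ?_⟩
        have e1 := listForward_cc A a b rest
        have e2 := listForward_cc A a v (b :: M)
        have e3 := listForward_cc A v b M
        have h6 : (if A a b then 1 else 0) ≤
            (if A a v then 1 else 0) + (if A v b then (1:ℕ) else 0) := by
          by_cases hab : A a b
          · rcases himp hab with h | h <;> simp [hab, h]
          · simp [hab]
        omega
      · push_neg at hgood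
        have hv₀ : v₀ ∈ vs := by simp [hvs]
        have hbv : ∀ v ∈ vs, A b v := fun v hv => by
          rcases hadj v hv b (by simp) with h | h
          · exact absurd h (hgood v hv).2.2
          · exact h
        have hadjE : ∀ w ∈ vs.erase v₀, ∀ u ∈ b :: rest, A w u ∨ A u w := fun w hw u hu =>
          hadj w (List.mem_of_mem_erase hw) u (List.mem_cons_of_mem a hu)
        have hElen : (vs.erase v₀).length + 1 ≤ (b :: rest).length := by
          rw [List.length_erase_of_mem hv₀]
          simp only [List.length_cons] at hlen1 ⊢
          omega
        have hpreE : ∀ w ∈ vs.erase v₀, ∀ u ∈ (b :: rest).head?, A u w := by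
          intro w hw u hu
          simp only [List.head?_cons, Option.mem_def, Option.some.injEq] at hu
          subst hu
          exact hbv w (List.mem_of_mem_erase hw)
        obtain ⟨L', hins, hcnt⟩ :=
          (IH (b :: rest) hlenT hchainT (vs.erase v₀) hadjE).2.1 hElen hpreE
        obtain ⟨M, rfl⟩ := ins_dest hins
        refine ⟨a :: v₀ :: b :: M, ins_insert a v₀ b rest M vs (vs.erase v₀)
          ((hadj v₀ hv₀ a (by simp)).symm) (hadj v₀ hv₀ b (by simp))
          (List.perm_cons_erase hv₀) hins, ?_⟩
        have e1 := listForward_cc A a b rest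
        have e2 := listForward_cc A a v₀ (b :: M)
        have e3 := listForward_cc A v₀ b M
        have h4 : (if A a v₀ then 1 else 0) = 0 := by simp [(hgood v₀ hv₀).2.1]
        have h5 : (if A v₀ b then 1 else 0) = 0 := by simp [(hgood v₀ hv₀).2.2]
        have h6 : (if A a b then (1:ℕ) else 0) ≤ 1 := ite_le_one'
        omega

end Core

/-- given an oriented path `l` (in an oriented graph `A`) on `n` vertices
and `k ≤ n - 2` further vertices `vs`, each adjacent to every vertex of `l`, one can
insert each vertex of `vs` into a distinct gap between consecutive vertices of `l`
(keeping the endpoints and the order of `l`, and placing no two inserted vertices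
consecutively) so that the number of forward arcs does not decrease. -/
theorem stmt4 {V : Type*} (A : V → V → Prop) (hA : IsOriented A)
    (l : List V) (hchain : l.Chain' fun u v => A u v ∨ A v u) (hnd : l.Nodup)
    (vs : List V) (hvsnd : vs.Nodup) (hdisj : ∀ v ∈ vs, v ∉ l)
    (hadj : ∀ v ∈ vs, ∀ u ∈ l, A v u ∨ A u v)
    (hlen : vs.length + 2 ≤ l.length) :
    ∃ l' : List V, (l'.Chain' fun u v => A u v ∨ A v u) ∧
      l.Sublist l' ∧ l'.Perm (l ++ vs) ∧
      l'.head? = l.head? ∧ l'.getLast? = l.getLast? ∧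
      (∀ p ∈ l'.zip l'.tail, ¬ (p.1 ∈ vs ∧ p.2 ∈ vs)) ∧
      listForward A l ≤ listForward A l' := by
  obtain ⟨l', hins, hcnt⟩ := (core hA l.length l le_rfl hchain vs hadj).2.2 hlen
  obtain ⟨hc, hs, hp, hh, hl, hz⟩ := hins
  refine ⟨l', hc, hs, hp, hh, hl, ?_, hcnt⟩
  intro p hp' hpv
  rcases hz p hp' with h | h
  · exact hdisj p.1 hpv.1 h
  · exact hdisj p.2 hpv.2 h
end

section
/- For n and δ integers with δ ≥ 2 and n > 2δ, there exists an oriented graph D on n vertices with minimum degree δ that satisfies the Ore-type condition (d(u) + d(v) ≥ n for all non-adjacent u, v), such that every Hamilton oriented cycle C of D satisfies σ_max(C) ≤ n − δ. -/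
/-- The arc relation of the construction. -/
def myArc (δ : ℕ) {n : ℕ} (u v : Fin n) : Prop :=
  (δ ≤ u.val ∧ v.val < δ) ∨ (δ < u.val ∧ δ < v.val ∧ u.val < v.val)

lemma card_val_lt (n δ : ℕ) (h : δ ≤ n) :
    Nat.card {u : Fin n // u.val < δ} = δ := by
  have e : {u : Fin n // u.val < δ} ≃ Fin δ :=
    { toFun := fun u => ⟨u.1.val, u.2⟩
      invFun := fun a => ⟨⟨a.val, lt_of_lt_of_le a.2 h⟩, a.2⟩
      left_inv := fun u => rfl
      right_inv := fun a => rfl }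
  rw [Nat.card_congr e, Nat.card_eq_fintype_card, Fintype.card_fin]

lemma card_val_ge (n δ : ℕ) (h : δ ≤ n) :
    Nat.card {u : Fin n // δ ≤ u.val} = n - δ := by
  classical
  have e : {u : Fin n // δ ≤ u.val} ≃ {u : Fin n // ¬ u.val < δ} :=
    Equiv.subtypeEquivRight (fun u => by omega)
  rw [Nat.card_congr e, Nat.card_eq_fintype_card, Fintype.card_subtype_compl]
  have := card_val_lt n δ h
  rw [Nat.card_eq_fintype_card] at this
  rw [this, Fintype.card_fin]

lemma card_ne_two (n δ m : ℕ) (hδ : δ < n) (hm : m < n) (hne : δ ≠ m) :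
    Nat.card {u : Fin n // u.val ≠ δ ∧ u.val ≠ m} = n - 2 := by
  classical
  have e : {u : Fin n // u.val ≠ δ ∧ u.val ≠ m} ≃ {u : Fin n // ¬ (u.val = δ ∨ u.val = m)} :=
    Equiv.subtypeEquivRight (fun u => by tauto)
  rw [Nat.card_congr e, Nat.card_eq_fintype_card, Fintype.card_subtype_compl]
  have h2 : Fintype.card {u : Fin n // u.val = δ ∨ u.val = m} = 2 := by
    rw [Fintype.card_subtype]
    have : (Finset.univ.filter (fun u : Fin n => u.val = δ ∨ u.val = m))
        = {(⟨δ, hδ⟩ : Fin n), ⟨m, hm⟩} := by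
      ext u
      simp [Fin.ext_iff]
    rw [this]
    rw [Finset.card_insert_of_notMem (by simp [Fin.ext_iff, hne]), Finset.card_singleton]
  rw [h2, Fintype.card_fin]

lemma deg_myArc (n δ : ℕ) (hδ : 2 ≤ δ) (hn : 2 * δ < n) (v : Fin n) :
    deg (myArc δ) v = if v.val < δ then n - δ else if v.val = δ then δ else n - 2 := by
  classical
  unfold deg
  split_ifs with h1 h2
  · have e : {u : Fin n // myArc δ v u ∨ myArc δ u v} ≃ {u : Fin n // δ ≤ u.val} :=
      Equiv.subtypeEquivRight (fun u => by simp only [myArc]; omega)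
    rw [Nat.card_congr e, card_val_ge n δ (by omega)]
  · have e : {u : Fin n // myArc δ v u ∨ myArc δ u v} ≃ {u : Fin n // u.val < δ} :=
      Equiv.subtypeEquivRight (fun u => by simp only [myArc]; omega)
    rw [Nat.card_congr e, card_val_lt n δ (by omega)]
  · have hv : δ < v.val := by omega
    have hvn : v.val < n := v.2
    have e : {u : Fin n // myArc δ v u ∨ myArc δ u v}
        ≃ {u : Fin n // u.val ≠ δ ∧ u.val ≠ v.val} :=
      Equiv.subtypeEquivRight (fun u => by
        simp only [myArc]
        have := u.2
        omega)
    rw [Nat.card_congr e, card_ne_two n δ v.val (by omega) hvn (by omega)]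

/-- For every `δ ≥ 2` and `n > 2δ` there is an oriented graph on `n`
vertices with minimum degree `δ` satisfying the Ore-type condition, all of whose
Hamilton oriented cycles `C` satisfy `σ_max(C) ≤ n - δ`. -/
theorem stmt6 (n δ : ℕ) (hδ : 2 ≤ δ) (hn : 2 * δ < n) :
    ∃ A : Fin n → Fin n → Prop, IsOriented A ∧
      (∀ v, δ ≤ deg A v) ∧ (∃ v, deg A v = δ) ∧
      (∀ u v : Fin n, u ≠ v → ¬ A u v → ¬ A v u → n ≤ deg A u + deg A v) ∧
      ∀ e : ZMod (Fintype.card (Fin n)) ≃ Fin n,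
        IsHamOrientedCycle A e → sigmaMax A e ≤ n - δ := by
  classical
  refine ⟨myArc δ, ?_, ?_, ?_, ?_, ?_⟩
  · -- oriented
    intro u v h
    constructor
    · rintro rfl
      simp only [myArc] at h
      omega
    · intro h'
      simp only [myArc] at h h'
      omega
  · -- min degree
    intro v
    rw [deg_myArc n δ hδ hn v]
    split_ifs <;> omega
  · -- vertex of degree δ
    refine ⟨⟨δ, by omega⟩, ?_⟩
    rw [deg_myArc n δ hδ hn]
    simp only [Fin.val_mk]
    split_ifs <;> omega
  · -- Ore condition
    intro u v hne h1 h2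
    have hne' : u.val ≠ v.val := fun h => hne (Fin.ext h)
    simp only [myArc] at h1 h2
    rw [deg_myArc n δ hδ hn u, deg_myArc n δ hδ hn v]
    split_ifs <;> omega
  · -- Hamilton cycles
    intro e he
    haveI : NeZero (Fintype.card (Fin n)) := ⟨by simp; omega⟩
    -- each A-set vertex forces a backward arc at its position
    have key : ∀ u : Fin n, u.val < δ → ∀ i : ZMod (Fintype.card (Fin n)), e i = u →
        myArc δ (e (i + 1)) (e i) := by
      intro u hu i hi
      rcases he i with h | h
      · exfalso
        rw [hi] at h
        simp only [myArc] at h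
        omega
      · exact h
    have key2 : ∀ u : Fin n, u.val < δ → ∀ i : ZMod (Fintype.card (Fin n)), e (i + 1) = u →
        myArc δ (e i) (e (i + 1)) := by
      intro u hu i hi
      rcases he i with h | h
      · exact h
      · exfalso
        rw [hi] at h
        simp only [myArc] at h
        omega
    have hminus : δ ≤ sigmaMinus (myArc δ) e := by
      have hinj : Function.Injective
          (fun u : {u : Fin n // u.val < δ} =>
            (⟨e.symm u.1, key u.1 u.2 (e.symm u.1) (e.apply_symm_apply u.1)⟩ :
              {i : ZMod (Fintype.card (Fin n)) // myArc δ (e (i + 1)) (e i)})) := by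
        intro u₁ u₂ h
        have := congrArg (fun x => e x.1) h
        simp at this
        exact Subtype.ext this
      have := Nat.card_le_card_of_injective _ hinj
      rwa [card_val_lt n δ (by omega)] at this
    have hplus : δ ≤ sigmaPlus (myArc δ) e := by
      have hs : ∀ u : Fin n, e (e.symm u - 1 + 1) = u := by
        intro u
        rw [sub_add_cancel, e.apply_symm_apply]
      have hinj : Function.Injective
          (fun u : {u : Fin n // u.val < δ} =>
            (⟨e.symm u.1 - 1, key2 u.1 u.2 (e.symm u.1 - 1) (hs u.1)⟩ :
              {i : ZMod (Fintype.card (Fin n)) // myArc δ (e i) (e (i + 1))})) := by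
        intro u₁ u₂ h
        have h' : e.symm u₁.1 - 1 = e.symm u₂.1 - 1 := congrArg Subtype.val h
        have : e.symm u₁.1 = e.symm u₂.1 := by
          have := congrArg (· + 1) h'
          simpa [sub_add_cancel] using this
        exact Subtype.ext (e.symm.injective this)
      have := Nat.card_le_card_of_injective _ hinj
      rwa [card_val_lt n δ (by omega)] at this
    have hsum : sigmaPlus (myArc δ) e + sigmaMinus (myArc δ) e = n := by
      have hcongr : sigmaMinus (myArc δ) e
          = Nat.card {i : ZMod (Fintype.card (Fin n)) // ¬ myArc δ (e i) (e (i + 1))} := by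
        unfold sigmaMinus
        refine Nat.card_congr (Equiv.subtypeEquivRight (fun i => ?_))
        constructor
        · intro h hf
          simp only [myArc] at h hf
          omega
        · intro h
          rcases he i with h' | h'
          · exact absurd h' h
          · exact h'
      rw [hcongr]
      unfold sigmaPlus
      have hsplit := Nat.card_congr
        (Equiv.sumCompl (fun i : ZMod (Fintype.card (Fin n)) => myArc δ (e i) (e (i + 1))))
      rw [Nat.card_sum] at hsplit
      have hcard : Nat.card (ZMod (Fintype.card (Fin n))) = n := by
        rw [Nat.card_eq_fintype_card, ZMod.card, Fintype.card_fin]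
      omega
    have hmax : sigmaMax (myArc δ) e = max (sigmaPlus (myArc δ) e) (sigmaMinus (myArc δ) e) :=
      rfl
    omega
end

section
/- Let n ≥ k + 4 with k ≥ 0 and n + k even. Let D be the oriented graph with vertex set A ∪ B where |A| = (n−k)/2 is an independent set, B induces a tournament on (n+k)/2 vertices, and every vertex of B has an arc to every vertex of A. Then s*(D) = k and every Hamilton oriented cycle C of D satisfies σ_max(C) ≤ (n+k)/2. -/
open Classical in
/-- `s*(D)`: the minimum of `d(u)+d(v)-n` over pairs of distinct non-adjacent vertices,
or `n-2` if there are no such pairs (i.e. `D` is a tournament). -/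
noncomputable def sStar {V : Type*} [Fintype V] (A : V → V → Prop) : ℤ :=
  if (∃ u v : V, u ≠ v ∧ ¬ A u v ∧ ¬ A v u) then
    sInf {z : ℤ | ∃ u v : V, u ≠ v ∧ ¬ A u v ∧ ¬ A v u ∧
      z = (deg A u : ℤ) + (deg A v : ℤ) - (Fintype.card V : ℤ)}
  else (Fintype.card V : ℤ) - 2

/-- the tight example for Conjecture 2 (case `n + k` even): an oriented
graph on `n ≥ k + 4` vertices consisting of an independent set `S` of size `(n-k)/2`,
a tournament on the remaining `(n+k)/2` vertices, and all arcs from the tournament part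
to `S`, has `s* = k` and every Hamilton oriented cycle `C` has `σ_max(C) ≤ (n+k)/2`. -/
theorem stmt7 (n k : ℕ) (hn : k + 4 ≤ n) (hpar : Even (n + k))
    {V : Type*} [Fintype V] (hcard : Fintype.card V = n)
    (A : V → V → Prop) (hA : IsOriented A)
    (S : Finset V) (hScard : S.card = (n - k) / 2)
    (hind : ∀ u ∈ S, ∀ v ∈ S, ¬ A u v)
    (htour : ∀ u v : V, u ∉ S → v ∉ S → u ≠ v → A u v ∨ A v u)
    (hBA : ∀ u v : V, u ∉ S → v ∈ S → A u v)
    (hAB : ∀ u v : V, u ∈ S → v ∉ S → ¬ A u v) :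
    sStar A = (k : ℤ) ∧
      ∀ e : ZMod (Fintype.card V) ≃ V, IsHamOrientedCycle A e →
        sigmaMax A e ≤ (n + k) / 2 := by
  classical
  subst hcard
  set n := Fintype.card V with hn'
  obtain ⟨m, hm⟩ := hpar
  have hkn : k ≤ n := by omega
  have hSn : S.card ≤ n := by
    simpa [hn'] using Finset.card_le_univ S
  have hS2 : 2 ≤ S.card := by omega
  -- degrees
  have hdegS : ∀ u ∈ S, deg A u = n - S.card := by
    intro u hu
    have hiff : ∀ w, (A u w ∨ A w u) ↔ w ∉ S := by
      intro w
      constructor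
      · rintro (h | h) <;> intro hw
        · exact hind u hu w hw h
        · exact hind w hw u hu h
      · intro hw
        exact Or.inr (hBA w u hw hu)
    rw [deg, Nat.card_congr (Equiv.subtypeEquivRight hiff), Nat.card_eq_fintype_card]
    simp [Fintype.card_subtype_compl, hn']
  -- sStar
  have hexS : ∃ a ∈ S, ∃ b ∈ S, a ≠ b := Finset.one_lt_card.mp (by omega)
  obtain ⟨a, ha, b, hb, hab⟩ := hexS
  have hex : ∃ u v : V, u ≠ v ∧ ¬ A u v ∧ ¬ A v u :=
    ⟨a, b, hab, hind a ha b hb, hind b hb a ha⟩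
  have hval : ∀ u v : V, u ≠ v → ¬ A u v → ¬ A v u →
      (deg A u : ℤ) + (deg A v : ℤ) - (n : ℤ) = (k : ℤ) := by
    intro u v hne h1 h2
    have hu : u ∈ S := by
      by_contra hu
      by_cases hv : v ∈ S
      · exact h1 (hBA u v hu hv)
      · rcases htour u v hu hv hne with h | h
        exacts [h1 h, h2 h]
    have hv : v ∈ S := by
      by_contra hv
      exact h2 (hBA v u hv hu)
    rw [hdegS u hu, hdegS v hv]
    omega
  have hset : {z : ℤ | ∃ u v : V, u ≠ v ∧ ¬ A u v ∧ ¬ A v u ∧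
      z = (deg A u : ℤ) + (deg A v : ℤ) - (n : ℤ)} = {(k : ℤ)} := by
    ext z
    simp only [Set.mem_setOf_eq, Set.mem_singleton_iff]
    constructor
    · rintro ⟨u, v, hne, h1, h2, rfl⟩
      exact hval u v hne h1 h2
    · rintro rfl
      exact ⟨a, b, hab, hind a ha b hb, hind b hb a ha,
        (hval a b hab (hind a ha b hb) (hind b hb a ha)).symm⟩
  refine ⟨?_, ?_⟩
  · rw [sStar, if_pos hex]
    rw [show {z : ℤ | ∃ u v : V, u ≠ v ∧ ¬ A u v ∧ ¬ A v u ∧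
      z = (deg A u : ℤ) + (deg A v : ℤ) - ((Fintype.card V : ℕ) : ℤ)} = {(k : ℤ)} from hset]
    exact csInf_singleton _
  · intro e he
    have hne0 : NeZero n := ⟨by omega⟩
    have hcZ : Fintype.card (ZMod n) = n := ZMod.card n
    set P : ZMod n → Prop := fun i => A (e i) (e (i + 1)) with hP
    have hQ : ∀ i, A (e (i + 1)) (e i) ↔ ¬ P i := by
      intro i
      constructor
      · intro hq hp
        exact (hA _ _ hp).2 hq
      · intro hnp
        exact (he i).resolve_left hnp
    have hplusEq : sigmaPlus A e = Fintype.card {i : ZMod n // P i} := by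
      rw [sigmaPlus, Nat.card_eq_fintype_card]
    have hminusEq : sigmaMinus A e = Fintype.card {i : ZMod n // ¬ P i} := by
      rw [sigmaMinus, Nat.card_congr (Equiv.subtypeEquivRight hQ), Nat.card_eq_fintype_card]
    have hPle : Fintype.card {i : ZMod n // P i} ≤ n := by
      calc Fintype.card {i : ZMod n // P i} ≤ Fintype.card (ZMod n) :=
            Fintype.card_subtype_le _
        _ = n := hcZ
    have hsum : sigmaPlus A e + sigmaMinus A e = n := by
      rw [hplusEq, hminusEq, Fintype.card_subtype_compl, hcZ]
      omega
    -- source of an arc is never in S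
    have hsrc : ∀ u v : V, A u v → u ∉ S := by
      intro u v h hu
      by_cases hv : v ∈ S
      · exact hind u hu v hv h
      · exact hAB u v hu hv h
    -- backward arcs at positions of S
    have hminus : S.card ≤ sigmaMinus A e := by
      have key : ∀ s : V, s ∈ S → A (e (e.symm s + 1)) (e (e.symm s)) := by
        intro s hs
        have h1 : e (e.symm s) = s := e.apply_symm_apply s
        have hnp : ¬ A (e (e.symm s)) (e (e.symm s + 1)) := by
          rw [h1]
          intro h
          exact hsrc _ _ h hs
        exact (he (e.symm s)).resolve_left hnp
      calc S.card = Fintype.card {s : V // s ∈ S} := (Fintype.card_coe S).symm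
        _ ≤ Fintype.card {i : ZMod n // A (e (i + 1)) (e i)} :=
            Fintype.card_le_of_injective
              (fun s => ⟨e.symm s.1, key s.1 s.2⟩)
              (fun s t h => Subtype.ext (e.symm.injective (congrArg Subtype.val h)))
        _ = sigmaMinus A e := by rw [sigmaMinus, Nat.card_eq_fintype_card]
    -- forward arcs before positions of S
    have hplus : S.card ≤ sigmaPlus A e := by
      have key : ∀ s : V, s ∈ S → A (e (e.symm s - 1)) (e (e.symm s - 1 + 1)) := by
        intro s hs
        have h0 : e.symm s - 1 + 1 = e.symm s := sub_add_cancel _ _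
        have h1 : e (e.symm s - 1 + 1) = s := by rw [h0, e.apply_symm_apply]
        have hnq : ¬ A (e (e.symm s - 1 + 1)) (e (e.symm s - 1)) := by
          rw [h1]
          intro h
          exact hsrc _ _ h hs
        exact (he (e.symm s - 1)).resolve_right hnq
      have hinj : Function.Injective
          (fun s : {s : V // s ∈ S} =>
            (⟨e.symm s.1 - 1, key s.1 s.2⟩ : {i : ZMod n // A (e i) (e (i + 1))})) := by
        intro s t h
        have h2 : e.symm s.1 - 1 = e.symm t.1 - 1 := congrArg Subtype.val h
        have h3 : e.symm s.1 = e.symm t.1 := by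
          have h4 := congrArg (fun x => x + 1) h2
          simpa [sub_add_cancel] using h4
        exact Subtype.ext (e.symm.injective h3)
      calc S.card = Fintype.card {s : V // s ∈ S} := (Fintype.card_coe S).symm
        _ ≤ Fintype.card {i : ZMod n // A (e i) (e (i + 1))} :=
            Fintype.card_le_of_injective _ hinj
        _ = sigmaPlus A e := by rw [sigmaPlus, Nat.card_eq_fintype_card]
    rw [sigmaMax]
    apply max_le <;> omega
end

section
/- A semicomplete multipartite digraph D with partite sets of sizes n₁,…,n_p has a Hamilton oriented path if and only if 2·max{n_i : i ∈ [p]} ≤ (n₁ + ⋯ + n_p) + 1. -/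
/-- `A` is a semicomplete multipartite digraph with partition map `part`: there are no
loops, and two vertices are joined by at least one arc iff they are in different
partite sets. -/
def IsSemicompleteMultipartite {V : Type*} {p : ℕ} (A : V → V → Prop)
    (part : V → Fin p) : Prop :=
  (∀ v, ¬ A v v) ∧ ∀ u v : V, (A u v ∨ A v u) ↔ part u ≠ part v

/-- `f` lists the vertices of a Hamilton oriented path of the digraph `A`. -/
def IsHamOrientedPath {V : Type*} [Fintype V] (A : V → V → Prop)
    (f : Fin (Fintype.card V) ≃ V) : Prop :=
  ∀ i : ℕ, ∀ h : i + 1 < Fintype.card V,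
    A (f ⟨i, Nat.lt_of_succ_lt h⟩) (f ⟨i + 1, h⟩) ∨
      A (f ⟨i + 1, h⟩) (f ⟨i, Nat.lt_of_succ_lt h⟩)

/-- `f` lists the vertices of a Hamilton (directed) path of the digraph `A`. -/
def IsHamDipath {V : Type*} [Fintype V] (A : V → V → Prop)
    (f : Fin (Fintype.card V) ≃ V) : Prop :=
  ∀ i : ℕ, ∀ h : i + 1 < Fintype.card V,
    A (f ⟨i, Nat.lt_of_succ_lt h⟩) (f ⟨i + 1, h⟩)

/-- Out-degree of `v` in the digraph `F`. -/
noncomputable def outdeg {V : Type*} [Fintype V] (F : V → V → Prop) (v : V) : ℕ :=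
  Nat.card {u : V // F v u}

/-- In-degree of `v` in the digraph `F`. -/
noncomputable def indeg {V : Type*} [Fintype V] (F : V → V → Prop) (v : V) : ℕ :=
  Nat.card {u : V // F u v}

/-- `F` is a 1-path-cycle factor of the digraph `A`: a spanning subdigraph in which
every vertex has in- and out-degree at most one, with exactly one vertex of in-degree 0
and exactly one vertex of out-degree 0; such a subdigraph consists of one directed path
together with a vertex-disjoint collection of directed cycles, covering all vertices. -/
def IsOnePathCycleFactor {V : Type*} [Fintype V] (A F : V → V → Prop) : Prop :=
  (∀ u v, F u v → A u v) ∧ (∀ v, outdeg F v ≤ 1 ∧ indeg F v ≤ 1) ∧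
    (∃! s, indeg F s = 0) ∧ (∃! t, outdeg F t = 0)

lemma aux_nocons (n : ℕ) (T : Finset ℕ) (h1 : ∀ a ∈ T, a < n) (h2 : ∀ a ∈ T, a + 1 ∉ T) :
    2 * T.card ≤ n + 1 := by
  have hdisj : Disjoint T (T.image (· + 1)) := by
    rw [Finset.disjoint_right]
    intro a ha hb
    simp only [Finset.mem_image] at ha
    obtain ⟨b, hb', rfl⟩ := ha
    exact h2 b hb' hb
  have hsub : T ∪ T.image (· + 1) ⊆ Finset.range (n + 1) := by
    intro a ha
    rw [Finset.mem_range]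
    rcases Finset.mem_union.mp ha with h | h
    · exact lt_trans (h1 a h) (Nat.lt_succ_self n)
    · simp only [Finset.mem_image] at h
      obtain ⟨b, hb, rfl⟩ := h
      exact Nat.succ_lt_succ (h1 b hb)
  have := Finset.card_le_card hsub
  rw [Finset.card_union_of_disjoint hdisj,
    Finset.card_image_of_injective _ (add_left_injective 1), Finset.card_range] at this
  omega

lemma aux_core {n p : ℕ} (c : Fin n → Fin p)
    (hint : ∀ i j k : Fin n, i ≤ j → j ≤ k → c i = c k → c j = c i)
    (hdec : ∀ i j : Fin n, i ≤ j →
      (Finset.univ.filter fun t => c t = c j).card ≤ (Finset.univ.filter fun t => c t = c i).card)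
    (hbound : ∀ d : Fin p, 2 * (Finset.univ.filter fun t => c t = d).card ≤ n + 1) :
    ∃ g : Fin n ≃ Fin n, ∀ (i : ℕ) (h : i + 1 < n),
      c (g ⟨i, Nat.lt_of_succ_lt h⟩) ≠ c (g ⟨i + 1, h⟩) := by
  set m := (n + 1) / 2 with hm
  set sz : Fin p → ℕ := fun d => (Finset.univ.filter fun t => c t = d).card with hsz
  have hszm : ∀ d, sz d ≤ m := fun d => by
    have h := hbound d
    have he : sz d = (Finset.univ.filter fun t => c t = d).card := rfl
    omega
  have claimSub : ∀ a b : Fin n, a ≤ b → c a = c b →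
      Finset.Icc a b ⊆ Finset.univ.filter fun t => c t = c a := by
    intro a b hab hc t ht
    rw [Finset.mem_Icc] at ht
    simp only [Finset.mem_filter, Finset.mem_univ, true_and]
    exact hint a t b ht.1 ht.2 hc
  have claimA : ∀ a b : Fin n, a ≤ b → c a = c b → b.val - a.val < sz (c a) := by
    intro a b hab hc
    have hcard := Finset.card_le_card (claimSub a b hab hc)
    rw [Fin.card_Icc] at hcard
    have he : sz (c a) = (Finset.univ.filter fun t => c t = c a).card := rfl
    have hab' : a.val ≤ b.val := hab
    omega
  have claimB : ∀ a b : Fin n, a ≤ b → c a = c b → sz (c a) ≤ b.val - a.val + 1 →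
      (Finset.univ.filter fun t => c t = c a) = Finset.Icc a b := by
    intro a b hab hc hcard
    refine (Finset.eq_of_subset_of_card_le (claimSub a b hab hc) ?_).symm
    rw [Fin.card_Icc]
    have he : sz (c a) = (Finset.univ.filter fun t => c t = c a).card := rfl
    have hab' : a.val ≤ b.val := hab
    omega
  set gf : Fin n → Fin n := fun j =>
    ⟨if j.val % 2 = 0 then j.val / 2 else m + j.val / 2, by
      have hj := j.isLt; split <;> omega⟩ with hgf
  have hgval : ∀ j : Fin n, (gf j).val = if j.val % 2 = 0 then j.val / 2 else m + j.val / 2 := by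
    intro j; rw [hgf]
  have ginj : Function.Injective gf := by
    intro j1 j2 h
    have h' : (gf j1).val = (gf j2).val := congrArg Fin.val h
    rw [hgval, hgval] at h'
    have h1 := j1.isLt; have h2 := j2.isLt
    apply Fin.ext
    split_ifs at h' <;> omega
  refine ⟨Equiv.ofBijective gf (Finite.injective_iff_bijective.mp ginj), ?_⟩
  intro i hi
  simp only [Equiv.ofBijective_apply]
  set x := gf ⟨i, Nat.lt_of_succ_lt hi⟩ with hx
  set y := gf ⟨i + 1, hi⟩ with hy
  have v1 : x.val = if i % 2 = 0 then i / 2 else m + i / 2 := hgval _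
  have v2 : y.val = if (i + 1) % 2 = 0 then (i + 1) / 2 else m + (i + 1) / 2 := hgval _
  by_cases hpar : i % 2 = 0
  · rw [if_pos hpar] at v1
    rw [if_neg (by omega : ¬(i + 1) % 2 = 0)] at v2
    intro heq
    have hxy : x ≤ y := by rw [Fin.le_def]; omega
    have hA := claimA x y hxy heq
    have := hszm (c x)
    omega
  · rw [if_neg hpar] at v1
    rw [if_pos (by omega : (i + 1) % 2 = 0)] at v2
    intro heq
    have heq' : c y = c x := heq.symm
    have hyx : y ≤ x := by rw [Fin.le_def]; omega
    have hA := claimA y x hyx heq'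
    have hszle := hszm (c y)
    have hszeq : sz (c y) = x.val - y.val + 1 := by omega
    have hIcc := claimB y x hyx heq' (le_of_eq hszeq)
    have hn0 : 0 < n := by omega
    set z : Fin n := ⟨0, hn0⟩ with hz
    have hzval : z.val = 0 := rfl
    have hz_ne : c z ≠ c y := by
      intro h0
      have hmem : z ∈ Finset.Icc y x := by
        rw [← hIcc]
        simp only [Finset.mem_filter, Finset.mem_univ, true_and]
        exact h0
      rw [Finset.mem_Icc] at hmem
      have : y.val ≤ z.val := hmem.1
      omega
    have hclass0 : ∀ u : Fin n, c u = c z → u.val < y.val := by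
      intro u hu
      by_contra hcon
      push_neg at hcon
      have hyu : y ≤ u := by rw [Fin.le_def]; omega
      have hzy : z ≤ y := by rw [Fin.le_def]; omega
      exact hz_ne (hint z y u hzy hyu hu.symm).symm
    have hyval1 : 1 ≤ y.val := by omega
    set w1 : Fin n := ⟨y.val - 1, by omega⟩ with hw1
    have hw1val : w1.val = y.val - 1 := rfl
    have hsub0 : (Finset.univ.filter fun t => c t = c z) ⊆ Finset.Icc z w1 := by
      intro u hu
      simp only [Finset.mem_filter, Finset.mem_univ, true_and] at hu
      rw [Finset.mem_Icc]
      have := hclass0 u hu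
      exact ⟨by rw [Fin.le_def]; omega, by rw [Fin.le_def]; omega⟩
    have hcard0 : sz (c z) ≤ y.val := by
      have hle := Finset.card_le_card hsub0
      rw [Fin.card_Icc] at hle
      have he : sz (c z) = (Finset.univ.filter fun t => c t = c z).card := rfl
      omega
    have hdec0 := hdec z y (by rw [Fin.le_def]; omega)
    have h1 : sz (c y) ≤ sz (c z) := hdec0
    omega
/-- a semicomplete multipartite digraph with partite sets of sizes
`n₁, …, n_p` has a Hamilton oriented path iff `2 max nᵢ ≤ (n₁ + ⋯ + n_p) + 1`. -/
theorem stmt10 {V : Type*} [Fintype V] {p : ℕ} (hp : 2 ≤ p)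
    (A : V → V → Prop) (part : V → Fin p)
    (hsmd : IsSemicompleteMultipartite A part) (hne : Function.Surjective part) :
    (∃ f : Fin (Fintype.card V) ≃ V, IsHamOrientedPath A f) ↔
      ∀ i : Fin p, 2 * Nat.card {v : V // part v = i} ≤ Fintype.card V + 1 := by
  classical
  obtain ⟨hirr, hiff⟩ := hsmd
  have hnatcard : ∀ d : Fin p, Nat.card {v : V // part v = d} =
      (Finset.univ.filter fun v => part v = d).card := by
    intro d
    rw [Nat.card_eq_fintype_card, Fintype.card_subtype]
  have hcount : ∀ (w : Fin (Fintype.card V) ≃ V) (d : Fin p),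
      (Finset.univ.filter fun t => part (w t) = d).card =
        (Finset.univ.filter fun v => part v = d).card := by
    intro w d
    rw [← Fintype.card_subtype, ← Fintype.card_subtype]
    exact Fintype.card_congr (w.subtypeEquiv fun t => Iff.rfl)
  constructor
  · rintro ⟨f, hf⟩ i
    set T : Finset ℕ :=
      (Finset.univ.filter fun j : Fin (Fintype.card V) => part (f j) = i).image Fin.val with hT
    have h1 : ∀ a ∈ T, a < Fintype.card V := by
      intro a ha
      rw [hT] at ha
      simp only [Finset.mem_image, Finset.mem_filter, Finset.mem_univ, true_and] at ha
      obtain ⟨j, _, rfl⟩ := ha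
      exact j.isLt
    have h2 : ∀ a ∈ T, a + 1 ∉ T := by
      intro a ha hb
      rw [hT] at ha hb
      simp only [Finset.mem_image, Finset.mem_filter, Finset.mem_univ, true_and] at ha hb
      obtain ⟨j, hj, hjv⟩ := ha
      obtain ⟨k, hk, hkv⟩ := hb
      have hlt : a + 1 < Fintype.card V := hkv ▸ k.isLt
      have hne' := (hiff _ _).1 (hf a hlt)
      have e1 : (⟨a, Nat.lt_of_succ_lt hlt⟩ : Fin (Fintype.card V)) = j := Fin.ext hjv.symm
      have e2 : (⟨a + 1, hlt⟩ : Fin (Fintype.card V)) = k := Fin.ext hkv.symm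
      rw [e1, e2, hj, hk] at hne'
      exact hne' rfl
    have hcard : T.card = Nat.card {v : V // part v = i} := by
      rw [hT, Finset.card_image_of_injective _ Fin.val_injective, ← Fintype.card_subtype,
        Nat.card_eq_fintype_card]
      exact Fintype.card_congr (f.subtypeEquiv fun j => Iff.rfl)
    have := aux_nocons (Fintype.card V) T h1 h2
    omega
  · intro hsz
    set key : V → ℕ := fun v =>
      (Fintype.card V - (Finset.univ.filter fun u => part u = part v).card) * p + (part v).val
      with hkey
    have keyfun : ∀ u v : V, part u = part v → key u = key v := by
      intro u v h
      rw [hkey]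
      simp only [h]
    have keypart : ∀ u v : V, key u = key v → part u = part v := by
      intro u v h
      have hmod : ∀ x : V, key x % p = (part x).val := by
        intro x
        have hx : key x = (Fintype.card V -
            (Finset.univ.filter fun u => part u = part x).card) * p + (part x).val := rfl
        rw [hx, Nat.add_comm, Nat.add_mul_mod_self_right]
        exact Nat.mod_eq_of_lt (part x).isLt
      have : (part u).val = (part v).val := by
        rw [← hmod u, ← hmod v, h]
      exact Fin.ext this
    have keysz : ∀ u v : V, key u ≤ key v →
        (Finset.univ.filter fun x => part x = part v).card ≤
          (Finset.univ.filter fun x => part x = part u).card := by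
      intro u v h
      by_contra hlt
      push_neg at hlt
      have h1 : (Finset.univ.filter fun x => part x = part v).card ≤ Fintype.card V :=
        le_trans (Finset.card_filter_le _ _) (le_of_eq (Finset.card_univ))
      have hcontra : key v < key u := by
        have hv := (part v).isLt
        calc key v = (Fintype.card V - (Finset.univ.filter fun x => part x = part v).card) * p
              + (part v).val := rfl
          _ < (Fintype.card V - (Finset.univ.filter fun x => part x = part v).card) * p + p := by
              omega
          _ = (Fintype.card V - (Finset.univ.filter fun x => part x = part v).card + 1) * p := by
              ring
          _ ≤ (Fintype.card V - (Finset.univ.filter fun x => part x = part u).card) * p := by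
              apply Nat.mul_le_mul_right
              omega
          _ ≤ key u := Nat.le_add_right _ _
      omega
    set e0 : Fin (Fintype.card V) ≃ V := (Fintype.equivFin V).symm with he0
    set σ : Equiv.Perm (Fin (Fintype.card V)) := Tuple.sort (key ∘ e0) with hσ
    have hmono : Monotone ((key ∘ e0) ∘ σ) := Tuple.monotone_sort (key ∘ e0)
    set w : Fin (Fintype.card V) ≃ V := σ.trans e0 with hw
    have hkw : ∀ i j : Fin (Fintype.card V), i ≤ j → key (w i) ≤ key (w j) := by
      intro i j hij
      exact hmono hij
    obtain ⟨g, hg⟩ := aux_core (fun t => part (w t))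
      (by
        intro i j k hij hjk hik
        have h1 := hkw i j hij
        have h2 := hkw j k hjk
        have h3 : key (w i) = key (w k) := keyfun _ _ hik
        exact keypart _ _ (by omega))
      (by
        intro i j hij
        rw [hcount w, hcount w]
        exact keysz _ _ (hkw i j hij))
      (by
        intro d
        rw [hcount w, ← hnatcard d]
        exact hsz d)
    refine ⟨g.trans w, ?_⟩
    intro i h
    exact (hiff _ _).2 (hg i h)
end

section
/- The complete multipartite graph K_{n₁,…,n_p} (p ≥ 2) has a Hamilton cycle if and only if 2·max{n_i} ≤ n₁ + ⋯ + n_p (assuming n₁ + ⋯ + n_p ≥ 3). -/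
open SimpleGraph List

namespace Stmt11

variable {V : Type*} {G : SimpleGraph V}

def mkWalk : ∀ (a : V) (l : List V) (b : V), List.Chain G.Adj a (l ++ [b]) → G.Walk a b
  | _, [], _, h => Walk.cons (List.isChain_pair.mp h) Walk.nil
  | a, c :: l, b, h =>
    Walk.cons (List.chain_cons.mp h).1 (mkWalk c l b (List.chain_cons.mp h).2)

lemma mkWalk_support : ∀ (a : V) (l : List V) (b : V) (h : List.Chain G.Adj a (l ++ [b])),
    (mkWalk a l b h).support = a :: (l ++ [b])
  | _, [], _, _ => rfl
  | a, c :: l, b, h => by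
    simp [mkWalk]; exact mkWalk_support c l b _

lemma chain_append_singleton : ∀ (a : V) (l : List V) (b : V) (R : V → V → Prop),
    List.Chain R a l → R ((a :: l).getLast (by simp)) b → List.Chain R a (l ++ [b])
  | a, [], b, R, _, h2 => List.isChain_pair.mpr h2
  | a, c :: l, b, R, h1, h2 => by
    refine List.chain_cons.mpr ⟨(List.chain_cons.mp h1).1, ?_⟩
    exact chain_append_singleton c l b R (List.chain_cons.mp h1).2 (by simpa using h2)

lemma isHamiltonian_of_list [Fintype V] [DecidableEq V]
    (u v : V) (l : List V)
    (hnd : (u :: v :: l).Nodup)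
    (hall : ∀ x : V, x ∈ u :: v :: l)
    (hne : l ≠ [])
    (hchain : List.Chain G.Adj u (v :: l))
    (hlast : G.Adj ((u :: v :: l).getLast (by simp)) u) :
    G.IsHamiltonian := by
  rw [List.Chain, List.chain_cons] at hchain
  obtain ⟨huv, hchain⟩ := hchain
  have hperm : (v :: (l ++ [u])) ~ (u :: v :: l) := by
    have : (v :: l) ++ [u] ~ u :: (v :: l) := List.perm_append_singleton u (v :: l)
    simpa using this
  have hch2 : List.Chain G.Adj v (l ++ [u]) := by
    refine chain_append_singleton v l u G.Adj hchain ?_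
    simpa using hlast
  set p : G.Walk v u := mkWalk v l u hch2 with hp
  have hsupp : p.support = v :: (l ++ [u]) := mkWalk_support v l u hch2
  have hpath : p.IsPath := by
    apply Walk.IsPath.mk'
    rw [hsupp]
    exact (hperm.symm).nodup hnd
  have hedge : s(u, v) ∉ p.edges := by
    obtain ⟨w, l', rfl⟩ := List.exists_cons_of_ne_nil hne
    intro hmem
    have hq : p = Walk.cons (List.chain_cons.mp hch2).1
        (mkWalk w l' u (List.chain_cons.mp hch2).2) := rfl
    rw [hq, Walk.edges_cons] at hmem
    simp only [List.mem_cons] at hmem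
    have hu_ne_v : u ≠ v := by simp at hnd; tauto
    have hu_ne_w : u ≠ w := by simp at hnd; tauto
    have hv_notin : v ∉ (mkWalk w l' u (List.chain_cons.mp hch2).2).support := by
      refine (congrArg (fun s => v ∉ s) (mkWalk_support w l' u _)).mpr ?_
      simp at hnd ⊢
      tauto
    rcases hmem with h1 | h2
    · rw [Sym2.eq, Sym2.rel_iff'] at h1
      simp at h1
      tauto
    · exact hv_notin (Walk.snd_mem_support_of_mem_edges _ h2)
  have hcyc : (Walk.cons huv p).IsCycle := (Walk.cons_isCycle_iff p huv).mpr ⟨hpath, hedge⟩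
  intro _
  refine ⟨u, Walk.cons huv p, ?_⟩
  rw [Walk.isHamiltonianCycle_iff_isCycle_and_support_count_tail_eq_one]
  refine ⟨hcyc, fun x => ?_⟩
  have : (Walk.cons huv p).support = u :: p.support := Walk.support_cons _ _
  rw [this, List.tail_cons, hsupp]
  exact List.count_eq_one_of_mem ((hperm.symm).nodup hnd) (hperm.mem_iff.mpr (hall x))


lemma isHamiltonian_of_fn [Fintype V] [DecidableEq V] {N : ℕ} (hN : 3 ≤ N)
    (F : Fin N → V) (hinj : Function.Injective F) (hsurj : ∀ x, ∃ k, F k = x)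
    (hadj : ∀ (k : ℕ) (h : k + 1 < N), G.Adj (F ⟨k, by omega⟩) (F ⟨k+1, h⟩))
    (hwrap : G.Adj (F ⟨N-1, by omega⟩) (F ⟨0, by omega⟩)) : G.IsHamiltonian := by
  obtain ⟨M, rfl⟩ : ∃ M, N = M + 3 := ⟨N - 3, by omega⟩
  set l : List V := List.ofFn (fun i : Fin (M+1) => F i.succ.succ) with hl
  have h1 : List.ofFn F = F 0 :: F 1 :: l := by simp [List.ofFn_succ, hl]
  have hnd : (F 0 :: F 1 :: l).Nodup := by rw [← h1]; exact List.nodup_ofFn.mpr hinj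
  have hall : ∀ x : V, x ∈ F 0 :: F 1 :: l := by
    intro x
    rw [← h1]
    obtain ⟨k, rfl⟩ := hsurj x
    exact List.mem_ofFn.mpr ⟨k, rfl⟩
  have hchain' : List.Chain' G.Adj (F 0 :: F 1 :: l) := by
    rw [← h1, List.Chain', List.isChain_iff_getElem]
    intro i hi
    simp only [List.length_ofFn] at hi
    rw [List.getElem_ofFn, List.getElem_ofFn]
    have := hadj i (by omega)
    convert this using 2 <;> simp
  have hlast : G.Adj ((F 0 :: F 1 :: l).getLast (by simp)) (F 0) := by
    have hne : List.ofFn F ≠ [] := by simp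
    have h2 : (List.ofFn F).getLast hne = F ⟨M + 2, by omega⟩ := by
      rw [List.getLast_eq_getElem, List.getElem_ofFn]
      congr 1
      simp [Fin.ext_iff]
    have h3 : (F 0 :: F 1 :: l).getLast (by simp) = F ⟨M + 2, by omega⟩ := by
      rw [← h2]; congr 1; rw [h1]
    rw [h3]
    convert hwrap using 2 <;> simp [Fin.ext_iff]
  refine isHamiltonian_of_list (F 0) (F 1) l hnd hall ?_ hchain' hlast
  simp [hl]



variable {p : ℕ} (m : Fin p → ℕ)

def S (c : Fin p) : ℕ := ∑ k ∈ Finset.univ.filter (· < c), m k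

lemma S_add_le (c : Fin p) : S m c + m c ≤ ∑ i, m i := by
  have h : S m c + m c = ∑ k ∈ insert c (Finset.univ.filter (· < c)), m k := by
    rw [S, Finset.sum_insert (by simp), add_comm]
  rw [h]
  exact Finset.sum_le_sum_of_subset (Finset.subset_univ _)

lemma S_mono {i j : Fin p} (hij : i < j) : S m i + m i ≤ S m j := by
  have h : S m i + m i = ∑ k ∈ insert i (Finset.univ.filter (· < i)), m k := by
    rw [S, Finset.sum_insert (by simp), add_comm]
  rw [h]
  apply Finset.sum_le_sum_of_subset
  intro x hx
  simp only [Finset.mem_insert, Finset.mem_filter, Finset.mem_univ, true_and] at hx ⊢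
  rcases hx with rfl | hx
  · exact hij
  · exact hx.trans hij

lemma S_ge (hp : 0 < p) (c : Fin p) (hc : c ≠ ⟨0, hp⟩) : m ⟨0, hp⟩ ≤ S m c := by
  apply Finset.single_le_sum (f := m) (fun _ _ => Nat.zero_le _)
  simp only [Finset.mem_filter, Finset.mem_univ, true_and]
  have : c.val ≠ 0 := fun h => hc (Fin.ext h)
  exact Nat.pos_of_ne_zero this

lemma enc_inj {x y : Σ i, Fin (m i)} (h : S m x.1 + x.2.val = S m y.1 + y.2.val) : x = y := by
  obtain ⟨i, a⟩ := x; obtain ⟨j, b⟩ := y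
  dsimp only at h
  rcases lt_trichotomy i j with hij | rfl | hij
  · have h1 := S_mono m hij; have h2 := a.2; omega
  · have hab : a = b := Fin.ext (by omega)
    rw [hab]
  · have h1 := S_mono m hij; have h2 := b.2; omega


lemma S_zero (hp : 0 < p) : S m ⟨0, hp⟩ = 0 := by
  have h : Finset.univ.filter (· < (⟨0, hp⟩ : Fin p)) = ∅ := by
    ext x; simp [Fin.lt_def]
  rw [S, h, Finset.sum_empty]

lemma ham_construct {p : ℕ} (hp : 0 < p) (m : Fin p → ℕ)
    (hmax : ∀ i, m i ≤ m ⟨0, hp⟩)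
    (hbal : ∀ i, 2 * m i ≤ ∑ j, m j)
    (hsum3 : 3 ≤ ∑ j, m j) :
    (completeMultipartiteGraph fun i => Fin (m i)).IsHamiltonian := by
  classical
  set N := ∑ j, m j with hNdef
  have hcard : Fintype.card (Σ i, Fin (m i)) = N := by
    simp [hNdef]
  let enc : (Σ i, Fin (m i)) → Fin N := fun x =>
    ⟨S m x.1 + x.2.val, lt_of_lt_of_le (by have := x.2.2; omega) (S_add_le m x.1)⟩
  have hencinj : Function.Injective enc := fun x y h =>
    enc_inj m (by simpa [enc, Fin.ext_iff] using h)
  have hencbij : Function.Bijective enc :=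
    (Fintype.bijective_iff_injective_and_card enc).mpr ⟨hencinj, by simp [hcard]⟩
  let E : (Σ i, Fin (m i)) ≃ Fin N := Equiv.ofBijective enc hencbij
  let g : Fin N → (Σ i, Fin (m i)) := E.symm
  have hg : ∀ a : Fin N, S m (g a).1 + ((g a).2 : ℕ) = a.val := fun a =>
    congrArg Fin.val (E.apply_symm_apply a)
  have hN3 : 3 ≤ N := hsum3
  let σ : Fin N → Fin N := fun k =>
    ⟨if k.val % 2 = 0 then k.val / 2 else (N - N / 2) + k.val / 2, by
      have := k.2; split <;> omega⟩
  have hσ : ∀ k : Fin N, (σ k).val =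
      if k.val % 2 = 0 then k.val / 2 else (N - N / 2) + k.val / 2 := fun k => rfl
  have hσinj : Function.Injective σ := by
    intro k k' h
    have h1 := congrArg Fin.val h
    rw [hσ, hσ] at h1
    have := k.2; have := k'.2
    apply Fin.ext
    split_ifs at h1 <;> omega
  let F : Fin N → (Σ i, Fin (m i)) := fun k => g (σ k)
  have hFinj : Function.Injective F := fun a b h => hσinj (E.symm.injective h)
  have hFbij : Function.Bijective F :=
    (Fintype.bijective_iff_injective_and_card F).mpr ⟨hFinj, by simp [hcard]⟩
  have pack : ∀ a b : Fin N, (g a).1 = (g b).1 →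
      ∃ Sc ja jb mc M0 : ℕ, a.val = Sc + ja ∧ b.val = Sc + jb ∧ ja < mc ∧ jb < mc ∧
        2 * mc ≤ N ∧ mc ≤ M0 ∧ (Sc = 0 ∨ M0 ≤ Sc) := by
    intro a b hcol
    refine ⟨S m (g a).1, (g a).2, (g b).2, m (g a).1, m ⟨0, hp⟩,
      (hg a).symm, ?_, (g a).2.2, ?_, hbal _, hmax _, ?_⟩
    · rw [hcol]; exact (hg b).symm
    · have hb2 := (g b).2.2; rw [hcol]; exact hb2
    · by_cases hc : (g a).1 = ⟨0, hp⟩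
      · left; rw [hc]; exact S_zero m hp
      · right; exact (hmax _).trans' (le_refl _) |>.trans (S_ge m hp _ hc) |>.trans (le_refl _)
  have hadj : ∀ (k : ℕ) (h : k + 1 < N),
      (completeMultipartiteGraph fun i => Fin (m i)).Adj (F ⟨k, by omega⟩) (F ⟨k+1, h⟩) := by
    intro k h
    simp only [comap_adj, top_adj, F]
    intro heq
    obtain ⟨Sc, ja, jb, mc, M0, e1, e2, hja, hjb, hbal2, hm0, hd⟩ :=
      pack (σ ⟨k, by omega⟩) (σ ⟨k+1, h⟩) heq
    rw [hσ] at e1 e2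
    simp only at e1 e2
    split_ifs at e1 e2 <;> omega
  have hwrap : (completeMultipartiteGraph fun i => Fin (m i)).Adj
      (F ⟨N-1, by omega⟩) (F ⟨0, by omega⟩) := by
    simp only [comap_adj, top_adj, F]
    intro heq
    obtain ⟨Sc, ja, jb, mc, M0, e1, e2, hja, hjb, hbal2, hm0, hd⟩ :=
      pack (σ ⟨N-1, by omega⟩) (σ ⟨0, by omega⟩) heq
    rw [hσ] at e1 e2
    simp only at e1 e2
    split_ifs at e1 e2 <;> omega
  exact isHamiltonian_of_fn hN3 F hFinj (fun x => hFbij.2 x) hadj hwrap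


lemma countP_two {α : Type*} : ∀ (l : List α) (P Q : α → Bool),
    (∀ x ∈ l, ¬(P x = true ∧ Q x = true)) → l.countP P + l.countP Q ≤ l.length
  | [], _, _, _ => by simp
  | a :: l, P, Q, h => by
    have ih := countP_two l P Q (fun x hx => h x (List.mem_cons_of_mem _ hx))
    have ha := h a List.mem_cons_self
    simp only [List.countP_cons, List.length_cons]
    by_cases h1 : P a = true <;> by_cases h2 : Q a = true
    · exact absurd ⟨h1, h2⟩ ha
    all_goals simp [h1, h2]; omega

def fiberEquiv {ι : Type*} (β : ι → Type*) (i : ι) : {x : Σ j, β j // x.1 = i} ≃ β i where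
  toFun x := x.2 ▸ x.1.2
  invFun b := ⟨⟨i, b⟩, rfl⟩
  left_inv := fun ⟨⟨j, b⟩, h⟩ => by subst h; rfl
  right_inv b := rfl

lemma countP_toList {α : Type*} [Fintype α] [DecidableEq α] (P : α → Prop) [DecidablePred P] :
    (Finset.univ.toList : List α).countP (fun x => decide (P x)) = (Finset.univ.filter P).card := by
  calc (Finset.univ.toList : List α).countP (fun x => decide (P x))
      = Multiset.countP P ↑(Finset.univ.toList : List α) := (Multiset.coe_countP _ _).symm
    _ = Multiset.countP P Finset.univ.val := by rw [Finset.coe_toList]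
    _ = Multiset.card (Finset.univ.val.filter P) := Multiset.countP_eq_card_filter _ _
    _ = (Finset.univ.filter P).card := rfl

lemma forward {p : ℕ} (n : Fin p → ℕ)
    (h : (completeMultipartiteGraph fun i => Fin (n i)).IsHamiltonian)
    (hsum : 3 ≤ ∑ j, n j) (i : Fin p) : 2 * n i ≤ ∑ j, n j := by
  classical
  have hcard : Fintype.card (Σ j, Fin (n j)) = ∑ j, n j := by simp
  obtain ⟨a, c, hc⟩ := h (by rw [hcard]; omega)
  have hlen : c.length = ∑ j, n j := by rw [hc.length_eq, hcard]
  have hcount : ∀ x, c.support.tail.count x = 1 := by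
    intro x
    rw [← Walk.cons_support_tail hc.1.not_nil, List.tail_cons]
    exact hc.isHamiltonian_tail x
  set T := c.support.tail with hT
  have hTnodup : T.Nodup := List.nodup_iff_count_le_one.mpr (fun x => le_of_eq (hcount x))
  have hTmem : ∀ x, x ∈ T := fun x => List.count_pos_iff.mp (by rw [hcount]; omega)
  have hTperm : T ~ (Finset.univ.toList : List (Σ j, Fin (n j))) :=
    (List.perm_ext_iff_of_nodup hTnodup (Finset.nodup_toList _)).mpr
      (fun x => by simp [hTmem x, Finset.mem_toList])
  have hTcount : T.countP (fun x => decide (x.1 = i)) = n i := by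
    rw [hTperm.countP_eq, countP_toList (fun x : Σ j, Fin (n j) => x.1 = i)]
    rw [← Fintype.card_subtype]
    rw [Fintype.card_congr (fiberEquiv (fun j => Fin (n j)) i)]
    simp
  set D := c.support.dropLast with hD
  have hsupp_cons : c.support = a :: T := c.support_eq_cons
  have hsupp_drop : D ++ [a] = c.support := by
    have h1 := List.dropLast_append_getLast (l := c.support) (by simp)
    rwa [c.getLast_support] at h1
  have hDperm : D ~ T := by
    have h2 : a :: D ~ a :: T := by
      calc a :: D ~ D ++ [a] := (List.perm_append_singleton _ _).symm
        _ = c.support := hsupp_drop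
        _ = a :: T := hsupp_cons
    exact (List.perm_cons a).mp h2
  have hDcount : D.countP (fun x => decide (x.1 = i)) = n i := by
    rw [hDperm.countP_eq]; exact hTcount
  have hfst : c.darts.map (·.fst) = D := c.map_fst_darts
  have hsnd : c.darts.map (·.snd) = T := c.map_snd_darts
  have hmain : c.darts.countP (fun d => decide (d.fst.1 = i)) +
      c.darts.countP (fun d => decide (d.snd.1 = i)) ≤ c.darts.length := by
    apply countP_two
    intro d _
    have hadj := d.adj
    simp only [comap_adj, top_adj] at hadj
    simp only [decide_eq_true_eq]
    rintro ⟨h1, h2⟩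
    exact hadj (h1.trans h2.symm)
  rw [← hfst] at hDcount
  rw [← hsnd] at hTcount
  rw [List.countP_map] at hDcount hTcount
  have e1 : c.darts.countP (fun d => decide (d.fst.1 = i)) = n i := hDcount
  have e2 : c.darts.countP (fun d => decide (d.snd.1 = i)) = n i := hTcount
  have hdlen : c.darts.length = c.length := c.length_darts
  calc 2 * n i = c.darts.countP (fun d => decide (d.fst.1 = i)) +
        c.darts.countP (fun d => decide (d.snd.1 = i)) := by rw [e1, e2]; ring
    _ ≤ c.darts.length := hmain
    _ = ∑ j, n j := by rw [hdlen, hlen]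


lemma isHamiltonian_of_iso {W : Type*} [Fintype V] [Fintype W] [DecidableEq V] [DecidableEq W]
    {H : SimpleGraph W} (e : G ≃g H) (h : G.IsHamiltonian) : H.IsHamiltonian := by
  intro hW
  have hV : Fintype.card V ≠ 1 := by rwa [Fintype.card_congr e.toEquiv]
  obtain ⟨a, c, hc⟩ := h hV
  exact ⟨e a, c.map e.toHom, hc.map (f := e.toHom) e.toEquiv.bijective⟩

end Stmt11

/-- the complete multipartite graph `K_{n₁,…,n_p}` (with `p ≥ 2`,
all parts nonempty and at least 3 vertices in total) has a Hamilton cycle iff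
`2 max nᵢ ≤ n₁ + ⋯ + n_p`. -/
theorem stmt11 (p : ℕ) (hp : 2 ≤ p) (n : Fin p → ℕ) (hpos : ∀ i, 1 ≤ n i)
    (hsum : 3 ≤ ∑ i, n i) :
    (SimpleGraph.completeMultipartiteGraph fun i => Fin (n i)).IsHamiltonian ↔
      ∀ i, 2 * n i ≤ ∑ j, n j := by
  classical
  have hp0 : 0 < p := by omega
  constructor
  · intro h i
    exact Stmt11.forward n h hsum i
  · intro hbal
    obtain ⟨c₀, -, hc₀⟩ := Finset.exists_max_image Finset.univ n ⟨⟨0, hp0⟩, Finset.mem_univ _⟩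
    set π : Fin p ≃ Fin p := Equiv.swap ⟨0, hp0⟩ c₀ with hπ
    have hsum' : ∑ j, n (π j) = ∑ j, n j := Equiv.sum_comp π n
    have hham : (SimpleGraph.completeMultipartiteGraph fun i => Fin (n (π i))).IsHamiltonian := by
      apply Stmt11.ham_construct hp0 (fun i => n (π i))
      · intro i
        have h0 : π ⟨0, hp0⟩ = c₀ := Equiv.swap_apply_left _ _
        rw [h0]
        exact hc₀ _ (Finset.mem_univ _)
      · intro i; rw [hsum']; exact hbal _
      · rw [hsum']; exact hsum
    refine Stmt11.isHamiltonian_of_iso ?_ hham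
    refine ⟨Equiv.sigmaCongrLeft (β := fun j => Fin (n j)) π, ?_⟩
    intro x y
    have hx : ((Equiv.sigmaCongrLeft (β := fun j => Fin (n j)) π) x).1 = π x.1 := rfl
    have hy : ((Equiv.sigmaCongrLeft (β := fun j => Fin (n j)) π) y).1 = π y.1 := rfl
    simp only [SimpleGraph.comap_adj, SimpleGraph.top_adj, hx, hy]
    exact not_congr (Equiv.injective π).eq_iff
end

section
/- Let D be a connected locally semicomplete digraph that is not strong, with acyclic ordering of strong components C₁, C₂, …, C_ℓ. Then every oriented (C₁, C_ℓ)-path P in D contains at least d(C₁, C_ℓ) forward arcs. -/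
/-- `A` is a locally semicomplete digraph: the out-neighbourhood and the
in-neighbourhood of each vertex induce semicomplete digraphs. -/
def LocallySemicomplete {V : Type*} (A : V → V → Prop) : Prop :=
  ∀ x u v : V, u ≠ v →
    (A x u → A x v → A u v ∨ A v u) ∧ (A u x → A v x → A u v ∨ A v u)

/-- The digraph `A` is connected (its underlying graph is connected). -/
def DigraphConnected {V : Type*} (A : V → V → Prop) : Prop :=
  ∀ u v : V, Relation.ReflTransGen (fun a b => A a b ∨ A b a) u v

/-- The digraph `A` is strongly connected. -/
def DigraphStrong {V : Type*} (A : V → V → Prop) : Prop :=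
  ∀ u v : V, Relation.ReflTransGen A u v

/-- `comp : V → Fin ℓ` is the acyclic ordering of the strong components of `A`:
its fibres are the strong components and no arc goes backwards. -/
def IsAcyclicOrdering {V : Type*} (A : V → V → Prop) {ℓ : ℕ} (comp : V → Fin ℓ) : Prop :=
  Function.Surjective comp ∧
    (∀ u v : V, comp u = comp v ↔
      (Relation.ReflTransGen A u v ∧ Relation.ReflTransGen A v u)) ∧
    (∀ u v : V, A u v → comp u ≤ comp v)

/-- `l` lists the vertices of an `(S,T)`-path for the relation `R`: the first vertex is
in `S`, the last in `T`, and the internal vertices avoid `S ∪ T`. -/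
def IsSTPathList {V : Type*} (R : V → V → Prop) (S T : Set V) (l : List V) : Prop :=
  l.Chain' R ∧ l.Nodup ∧
    (∃ a ∈ S, l.head? = some a) ∧ (∃ b ∈ T, l.getLast? = some b) ∧
    ∀ v ∈ (l.drop 1).dropLast, v ∉ S ∪ T

/-- The length `d(S,T)` of a shortest directed `(S,T)`-path in the digraph `A`. -/
noncomputable def distST {V : Type*} (A : V → V → Prop) (S T : Set V) : ℕ :=
  sInf {m : ℕ | ∃ l : List V, IsSTPathList A S T l ∧ l.length = m + 1}

section Aux

variable {V : Type*}

/-- `ReachN A S n v`: there is a directed walk with `n` arcs from some vertex of `S` to `v`. -/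
def ReachN (A : V → V → Prop) (S : Set V) : ℕ → V → Prop
  | 0, v => v ∈ S
  | n+1, v => ∃ u, ReachN A S n u ∧ A u v

lemma reachN_zero {A : V → V → Prop} {S : Set V} {v : V} : ReachN A S 0 v ↔ v ∈ S :=
  Iff.rfl

lemma reachN_succ {A : V → V → Prop} {S : Set V} {n : ℕ} {v : V} :
    ReachN A S (n+1) v ↔ ∃ u, ReachN A S n u ∧ A u v := Iff.rfl

/-- getLast? of a drop. -/
lemma getLast?_drop_of_lt {α : Type*} {p : List α} {k : ℕ} (h : k < p.length) :
    (p.drop k).getLast? = p.getLast? := by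
  conv_rhs => rw [← List.take_append_drop k p]
  rw [List.getLast?_append_of_ne_nil]
  intro hnil
  rw [List.drop_eq_nil_iff] at hnil
  omega

end Aux

section Key

variable {V : Type*} {A : V → V → Prop} {ℓ : ℕ} {comp : V → Fin ℓ} {c1 : Fin ℓ}

/-- Key lemma: in a locally semicomplete digraph whose arcs respect the ordering `comp`,
if `a` is reachable from the bottom component within `k` steps and `b → a` is an arc,
then `b` is reachable within `k` steps as well. -/
lemma reachN_key (hls : ∀ x u v : V, u ≠ v →
      (A x u → A x v → A u v ∨ A v u) ∧ (A u x → A v x → A u v ∨ A v u))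
    (hmono : ∀ u v, A u v → comp u ≤ comp v) (hc1 : ∀ d, c1 ≤ d) :
    ∀ k a b, ReachN A {v | comp v = c1} k a → A b a →
      ∃ m ≤ k, ReachN A {v | comp v = c1} m b := by
  intro k
  induction k with
  | zero =>
    intro a b ha hba
    refine ⟨0, le_refl _, ?_⟩
    have h1 : comp b ≤ comp a := hmono _ _ hba
    have h2 : comp a = c1 := ha
    exact le_antisymm (h2 ▸ h1) (hc1 _)
  | succ k ih =>
    intro a b ha hba
    obtain ⟨u, hu, hua⟩ := ha
    by_cases hbu : b = u
    · exact ⟨k, Nat.le_succ _, hbu ▸ hu⟩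
    · rcases (hls a u b (Ne.symm hbu)).2 hua hba with h | h
      · exact ⟨k+1, le_refl _, ⟨u, hu, h⟩⟩
      · obtain ⟨m, hm, hr⟩ := ih u b hu h
        exact ⟨m, hm.trans (Nat.le_succ _), hr⟩

end Key

section Forward

variable {V : Type*} (A : V → V → Prop)

lemma listForward_singleton (x : V) : listForward A [x] = 0 := by
  simp [listForward]

lemma listForward_cons_of_pos {x y : V} (t : List V) (h : A x y) :
    listForward A (x :: y :: t) = listForward A (y :: t) + 1 := by
  simp only [listForward, List.tail_cons, List.zip_cons_cons, List.countP_cons]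
  rw [if_pos]
  simp only [decide_eq_true_eq]
  exact h

lemma listForward_cons_le (x y : V) (t : List V) :
    listForward A (y :: t) ≤ listForward A (x :: y :: t) := by
  simp only [listForward, List.tail_cons, List.zip_cons_cons, List.countP_cons]
  exact Nat.le_add_right _ _

end Forward

section Chain

variable {V : Type*} {A : V → V → Prop} {ℓ : ℕ} {comp : V → Fin ℓ} {c1 : Fin ℓ}

lemma chain_reach (hls : LocallySemicomplete A)
    (hmono : ∀ u v, A u v → comp u ≤ comp v) (hc1 : ∀ d, c1 ≤ d) :
    ∀ (xs : List V) (x : V) (F : ℕ),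
      (∃ m ≤ F, ReachN A {v | comp v = c1} m x) →
      List.Chain' (fun a b => A a b ∨ A b a) (x :: xs) →
      ∃ m ≤ F + listForward A (x :: xs),
        ReachN A {v | comp v = c1} m ((x :: xs).getLast (List.cons_ne_nil _ _)) := by
  intro xs
  induction xs with
  | nil =>
    intro x F hx _
    simpa [listForward_singleton] using hx
  | cons y t ih =>
    intro x F hx hch
    obtain ⟨m, hm, hr⟩ := hx
    have hxy := (List.isChain_cons_cons.mp hch).1
    have hch' := (List.isChain_cons_cons.mp hch).2
    have hlast : (x :: y :: t).getLast (List.cons_ne_nil _ _)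
        = (y :: t).getLast (List.cons_ne_nil _ _) := List.getLast_cons _
    rw [hlast]
    by_cases hA : A x y
    · have hy : ReachN A {v | comp v = c1} (m+1) y := ⟨x, hr, hA⟩
      obtain ⟨m', hm', hr'⟩ := ih y (F+1) ⟨m+1, Nat.succ_le_succ hm, hy⟩ hch'
      refine ⟨m', ?_, hr'⟩
      rw [listForward_cons_of_pos A t hA]
      omega
    · have hyx : A y x := hxy.resolve_left hA
      obtain ⟨m', hm', hr'⟩ := reachN_key hls hmono hc1 m x y hr hyx
      obtain ⟨m'', hm'', hr''⟩ := ih y F ⟨m', hm'.trans hm, hr'⟩ hch'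
      refine ⟨m'', ?_, hr''⟩
      have := listForward_cons_le A x y t
      omega

lemma reachN_exists_list {S : Set V} :
    ∀ n v, ReachN A S n v →
      ∃ p : List V, p.Chain' A ∧ p.length = n + 1 ∧
        (∃ a ∈ S, p.head? = some a) ∧ p.getLast? = some v := by
  intro n
  induction n with
  | zero =>
    intro v hv
    exact ⟨[v], List.isChain_singleton v, rfl, ⟨v, hv, rfl⟩, rfl⟩
  | succ n ih =>
    rintro v ⟨u, hu, huv⟩
    obtain ⟨p, hc, hlen, ⟨a, haS, hha⟩, hlast⟩ := ih u hu
    have hpne : p ≠ [] := by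
      intro h; rw [h] at hlen; simp at hlen
    refine ⟨p ++ [v], ?_, by simp [hlen], ⟨a, haS, ?_⟩, by simp⟩
    · refine List.isChain_append.mpr ⟨hc, List.isChain_singleton v, ?_⟩
      intro w hw z hz
      simp only [List.head?_cons, Option.mem_def, Option.some_inj] at hz
      rw [hlast] at hw
      simp only [Option.mem_def, Option.some_inj] at hw
      rw [← hw, ← hz]
      exact huv
    · rw [List.head?_append_of_ne_nil _ hpne, hha]

end Chain

section Shrink

variable {V : Type*}

/-- There is a directed walk (as a list) from `S` to `T` with `n` arcs. -/
def WalkSet (A : V → V → Prop) (S T : Set V) (n : ℕ) : Prop :=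
  ∃ p : List V, p.Chain' A ∧ p.length = n + 1 ∧
    (∃ a ∈ S, p.head? = some a) ∧ (∃ b ∈ T, p.getLast? = some b)

lemma getLast?_take_succ {α : Type*} {p : List α} {k : ℕ} (hk : k < p.length) :
    (p.take (k+1)).getLast? = some (p[k]'hk) := by
  rw [List.getLast?_eq_getElem?]
  have hlen : (p.take (k+1)).length = k + 1 := by
    rw [List.length_take]; omega
  rw [hlen]
  simp only [Nat.add_sub_cancel]
  rw [List.getElem?_take, if_pos (Nat.lt_succ_self k), List.getElem?_eq_getElem hk]

lemma head?_take_pos {α : Type*} {p : List α} {k : ℕ} (hk : 0 < k) (hp : p ≠ []) :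
    (p.take k).head? = p.head? := by
  cases p with
  | nil => simp at hp
  | cons a t =>
    cases k with
    | zero => omega
    | succ k => simp [List.take_succ_cons]

lemma shrink (A : V → V → Prop) (S T : Set V) :
    ∀ n, WalkSet A S T n →
      ∃ n' ≤ n, ∃ q : List V, IsSTPathList A S T q ∧ q.length = n' + 1 := by
  intro n
  induction n using Nat.strong_induction_on with
  | _ n ih =>
  rintro ⟨p, hc, hlen, ⟨a, haS, hha⟩, ⟨b, hbT, hlb⟩⟩
  have hple : p ≠ [] := by intro h; rw [h] at hha; simp at hha
  by_cases hbad : ∃ v ∈ (p.drop 1).dropLast, v ∈ S ∪ T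
  · obtain ⟨v, hv, hvST⟩ := hbad
    obtain ⟨i, hi, hig⟩ := List.mem_iff_getElem.mp hv
    have hiL : i < n - 1 := by
      simpa [List.length_dropLast, List.length_drop, hlen] using hi
    have hi1 : i + 1 < p.length := by rw [hlen]; omega
    have hvp : p[i+1]'hi1 = v := by
      rw [← hig, List.getElem_dropLast, List.getElem_drop]
      congr 1
      omega
    rcases hvST with hvS | hvT
    · -- v ∈ S: take the suffix starting at v
      have hw : WalkSet A S T (n - i - 1) := by
        refine ⟨p.drop (i+1), hc.drop _, ?_, ⟨v, hvS, ?_⟩, ⟨b, hbT, ?_⟩⟩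
        · rw [List.length_drop, hlen]; omega
        · rw [List.head?_drop, List.getElem?_eq_getElem hi1, hvp]
        · rw [getLast?_drop_of_lt hi1, hlb]
      obtain ⟨n', hn', hq⟩ := ih (n - i - 1) (by omega) hw
      exact ⟨n', by omega, hq⟩
    · -- v ∈ T: take the prefix ending at v
      have hw : WalkSet A S T (i + 1) := by
        refine ⟨p.take (i+2), hc.take _, ?_, ⟨a, haS, ?_⟩, ⟨v, hvT, ?_⟩⟩
        · rw [List.length_take]; omega
        · rw [head?_take_pos (by omega) hple, hha]
        · rw [getLast?_take_succ hi1, hvp]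
      obtain ⟨n', hn', hq⟩ := ih (i + 1) (by omega) hw
      exact ⟨n', by omega, hq⟩
  · by_cases hnd : p.Nodup
    · push_neg at hbad
      exact ⟨n, le_refl _, p, ⟨hc, hnd, ⟨a, haS, hha⟩, ⟨b, hbT, hlb⟩, hbad⟩, hlen⟩
    · have hnd' : ¬ p.Pairwise (· ≠ ·) := hnd
      rw [List.pairwise_iff_getElem] at hnd'
      push_neg at hnd'
      obtain ⟨i, j, hi, hj, hij, heq⟩ := hnd'
      have hjn : j ≤ n := by rw [hlen] at hj; omega
      have hii : i < p.length := hi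
      -- splice out the cycle between positions i and j
      have hw : WalkSet A S T (i + n - j) := by
        refine ⟨p.take (i+1) ++ p.drop (j+1), ?_, ?_, ⟨a, haS, ?_⟩, ⟨b, hbT, ?_⟩⟩
        · refine List.isChain_append.mpr ⟨hc.take _, hc.drop _, ?_⟩
          intro w hw' z hz'
          rw [getLast?_take_succ hii] at hw'
          simp only [Option.mem_def, Option.some_inj] at hw'
          rw [List.head?_drop] at hz'
          have hj1 : j + 1 < p.length := by
            rcases Nat.lt_or_ge (j+1) p.length with h | h
            · exact h
            · exfalso
              rw [List.getElem?_eq_none (by omega)] at hz'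
              simp at hz'
          rw [List.getElem?_eq_getElem hj1] at hz'
          simp only [Option.mem_def, Option.some_inj] at hz'
          have harc : A (p[j]'hj) (p[j+1]'hj1) := by
            have := List.isChain_iff_getElem.mp hc j (by omega)
            simpa [List.get_eq_getElem] using this
          rw [← hw', ← hz']
          rw [heq]
          exact harc
        · rw [List.length_append, List.length_take, List.length_drop, hlen]
          omega
        · rw [List.head?_append_of_ne_nil _ (by
            apply List.ne_nil_of_length_pos
            rw [List.length_take]
            omega)]
          rw [head?_take_pos (by omega) hple, hha]
        · rcases Nat.lt_or_ge (j+1) p.length with h | h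
          · rw [List.getLast?_append_of_ne_nil _ (by
              intro hnil
              rw [List.drop_eq_nil_iff] at hnil
              omega)]
            rw [getLast?_drop_of_lt h, hlb]
          · have hdnil : p.drop (j+1) = [] := List.drop_eq_nil_iff.mpr h
            rw [hdnil, List.append_nil, getLast?_take_succ hii]
            have hjlast : j = p.length - 1 := by omega
            have : p.getLast? = some (p[j]'hj) := by
              rw [List.getLast?_eq_getElem?, ← hjlast, List.getElem?_eq_getElem hj]
            rw [this] at hlb
            rw [heq]
            exact hlb
      obtain ⟨n', hn', hq⟩ := ih (i + n - j) (by omega) hw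
      exact ⟨n', by omega, hq⟩

end Shrink

/-- in a connected non-strong locally semicomplete digraph with acyclic
ordering of strong components `C₁, …, C_ℓ`, every oriented `(C₁, C_ℓ)`-path has at
least `d(C₁, C_ℓ)` forward arcs. -/
theorem stmt14 {V : Type*} [Fintype V] (A : V → V → Prop)
    (hls : LocallySemicomplete A) (hconn : DigraphConnected A)
    (hns : ¬ DigraphStrong A) {ℓ : ℕ} (comp : V → Fin ℓ)
    (hord : IsAcyclicOrdering A comp)
    (c1 cl : Fin ℓ) (hc1 : ∀ d, c1 ≤ d) (hcl : ∀ d, d ≤ cl)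
    (l : List V)
    (hl : IsSTPathList (fun a b => A a b ∨ A b a)
      {v | comp v = c1} {v | comp v = cl} l) :
    distST A {v | comp v = c1} {v | comp v = cl} ≤ listForward A l := by
  obtain ⟨hchain, hndl, ⟨a, ha, hhead⟩, ⟨b, hb, hlastb⟩, hint⟩ := hl
  cases l with
  | nil => simp at hhead
  | cons x xs =>
    simp only [List.head?_cons, Option.some_inj] at hhead
    have hx0 : ReachN A {v | comp v = c1} 0 x := by
      rw [reachN_zero, hhead]; exact ha
    obtain ⟨m, hm, hr⟩ :=
      chain_reach hls hord.2.2 hc1 xs x 0 ⟨0, le_refl 0, hx0⟩ hchain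
    have hlastv : (x :: xs).getLast (List.cons_ne_nil _ _) = b := by
      have h1 : (x :: xs).getLast? = some ((x :: xs).getLast (List.cons_ne_nil _ _)) :=
        List.getLast?_eq_getLast _
      rw [h1] at hlastb
      exact Option.some_inj.mp hlastb
    obtain ⟨p, hcp, hplen, hph, hpl⟩ := reachN_exists_list m _ (hlastv ▸ hr)
    have hw : WalkSet A {v | comp v = c1} {v | comp v = cl} m :=
      ⟨p, hcp, hplen, hph, ⟨b, hb, by rw [hpl]⟩⟩
    obtain ⟨n', hn', q, hq, hqlen⟩ := shrink A _ _ m hw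
    have hd : distST A {v | comp v = c1} {v | comp v = cl} ≤ n' :=
      Nat.sInf_le ⟨q, hq, hqlen⟩
    omega
end

section
/- Let D be a connected locally semicomplete digraph that is not strong. Then its strong components can be uniquely ordered C₁, C₂, …, C_ℓ such that there is no arc from V(C_j) to V(C_i) for j > i, and V(C_i) dominates V(C_{i+1}) for each i ∈ [ℓ−1] (i.e., every vertex of C_i has an arc to every vertex of C_{i+1}). -/
open Relation

section Aux
variable {V : Type*} {A : V → V → Prop}

/-- Comparability helper: an in-neighbour of the end of a path is comparable
with the start. -/
lemma lsc_L1 (hls : LocallySemicomplete A) :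
    ∀ {v w : V}, ReflTransGen A v w → ∀ u, A u w →
      ReflTransGen A u v ∨ ReflTransGen A v u := by
  intro v w h
  induction h with
  | refl => exact fun u hu => Or.inl (ReflTransGen.single hu)
  | @tail y w hvy hyw ih =>
    intro u huw
    by_cases h' : u = y
    · exact Or.inr (h' ▸ hvy)
    · rcases (hls w u y h').2 huw hyw with h2 | h2
      · exact ih u h2
      · exact Or.inr (hvy.tail h2)

/-- Comparability helper: an out-neighbour of the start of a path is comparable
with the end. -/
lemma lsc_L2 (hls : LocallySemicomplete A) :
    ∀ {w v : V}, ReflTransGen A w v → ∀ u, A w u →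
      ReflTransGen A u v ∨ ReflTransGen A v u := by
  intro w v h
  induction h using Relation.ReflTransGen.head_induction_on with
  | refl => exact fun u hu => Or.inr (ReflTransGen.single hu)
  | @head w z hwz hzv ih =>
    intro u huw
    by_cases h' : u = z
    · exact Or.inl (h' ▸ hzv)
    · rcases (hls w u z h').1 huw hwz with h2 | h2
      · exact Or.inl (ReflTransGen.head h2 hzv)
      · exact ih u h2

/-- Any two vertices of a connected locally semicomplete digraph are comparable. -/
lemma lsc_total (hls : LocallySemicomplete A) (hconn : DigraphConnected A) :
    ∀ u v : V, ReflTransGen A u v ∨ ReflTransGen A v u := by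
  intro u v
  have h := hconn u v
  induction h with
  | refl => exact Or.inl ReflTransGen.refl
  | @tail y w hy hyw ih =>
    rcases hyw with h1 | h1
    · rcases ih with h2 | h2
      · exact Or.inl (h2.tail h1)
      · rcases lsc_L2 hls h2 w h1 with h3 | h3
        · exact Or.inr h3
        · exact Or.inl h3
    · rcases ih with h2 | h2
      · rcases lsc_L1 hls h2 w h1 with h3 | h3
        · exact Or.inr h3
        · exact Or.inl h3
      · exact Or.inr (ReflTransGen.head h1 h2)

lemma lsc_S1 (hls : LocallySemicomplete A) {x b : V} (hxb : A x b) :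
    ∀ {w : V}, ReflTransGen A w b → ¬ ReflTransGen A w x → A x w := by
  intro w h
  induction h using Relation.ReflTransGen.head_induction_on with
  | refl => exact fun _ => hxb
  | @head w z hwz hzb ih =>
    intro hwx
    have hzx : ¬ ReflTransGen A z x := fun h => hwx ((ReflTransGen.single hwz).trans h)
    have hxz : A x z := ih hzx
    have hne : x ≠ w := fun h => hwx (h ▸ ReflTransGen.refl)
    rcases (hls z x w hne).2 hxz hwz with h2 | h2
    · exact h2
    · exact absurd (ReflTransGen.single h2) hwx

/-- Domination lemma: an arc between distinct strong components extends to full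
domination between the components. -/
lemma lsc_dom (hls : LocallySemicomplete A) {x b : V} (hxb : A x b)
    (hbx : ¬ ReflTransGen A b x) :
    ∀ {w : V}, ReflTransGen A x w → ReflTransGen A w x →
      ∀ v, ReflTransGen A b v → ReflTransGen A v b → A w v := by
  intro w hxw
  induction hxw with
  | refl =>
    intro _ v hbv hvb
    exact lsc_S1 hls hxb hvb (fun h => hbx (hbv.trans h))
  | @tail y w hxy hyw ih =>
    intro hwx v hbv hvb
    have hyx : ReflTransGen A y x := (ReflTransGen.single hyw).trans hwx
    have hyv : A y v := ih hyx v hbv hvb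
    have hne : w ≠ v := by
      rintro rfl
      exact hbx (hbv.trans hwx)
    rcases (hls y w v hne).1 hyw hyv with h2 | h2
    · exact h2
    · exact absurd (hbv.trans ((ReflTransGen.single h2).trans hwx)) hbx

/-- Crossing lemma: along a path leaving a strong component one finds a crossing arc. -/
lemma lsc_cross : ∀ {u v : V}, ReflTransGen A u v →
    (ReflTransGen A v u ∨ ∃ a b, A a b ∧ (ReflTransGen A u a ∧ ReflTransGen A a u) ∧
      ReflTransGen A b v ∧ ¬ ReflTransGen A b u) := by
  intro u v h
  induction h using Relation.ReflTransGen.head_induction_on with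
  | refl => exact Or.inl ReflTransGen.refl
  | @head u z huz hzv ih =>
    by_cases hzu : ReflTransGen A z u
    · rcases ih with h1 | ⟨a, b, hab, ⟨hza, haz⟩, hbv, hbz⟩
      · exact Or.inl (h1.trans hzu)
      · refine Or.inr ⟨a, b, hab, ⟨(ReflTransGen.single huz).trans hza, haz.trans hzu⟩, hbv,
          fun h => hbz (h.trans (ReflTransGen.single huz))⟩
    · exact Or.inr ⟨u, z, huz, ⟨ReflTransGen.refl, ReflTransGen.refl⟩,
        hzv, hzu⟩

end Aux

/-- the strong components of a connected non-strong locally semicomplete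
digraph admit a unique acyclic ordering `C₁, …, C_ℓ` (no arc from `C_j` to `C_i` for
`j > i`) in which moreover each `C_i` dominates `C_{i+1}`. -/
theorem stmt18 {V : Type*} [Fintype V] (A : V → V → Prop)
    (hls : LocallySemicomplete A) (hconn : DigraphConnected A)
    (hns : ¬ DigraphStrong A) :
    ∃ (ℓ : ℕ) (comp : V → Fin ℓ), IsAcyclicOrdering A comp ∧
      (∀ u v : V, (comp u : ℕ) + 1 = (comp v : ℕ) → A u v) ∧
      (∀ (ℓ' : ℕ) (comp' : V → Fin ℓ'), IsAcyclicOrdering A comp' → ℓ' = ℓ) ∧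
      (∀ comp' : V → Fin ℓ, IsAcyclicOrdering A comp' → comp' = comp) := by
    classical
  let s : Setoid V :=
    ⟨fun u v => ReflTransGen A u v ∧ ReflTransGen A v u,
     ⟨fun _ => ⟨.refl, .refl⟩, fun h => ⟨h.2, h.1⟩,
      fun h h' => ⟨h.1.trans h'.1, h'.2.trans h.2⟩⟩⟩
  letI : Fintype (Quotient s) := Quotient.fintype s
  letI : LinearOrder (Quotient s) :=
  { le := Quotient.lift₂ (fun u v => ReflTransGen A u v)
      (by
        intro a b c d hac hbd
        exact propext ⟨fun h => (hac.2.trans h).trans hbd.1,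
          fun h => (hac.1.trans h).trans hbd.2⟩)
    le_refl := fun a => Quotient.inductionOn a fun _ => ReflTransGen.refl
    le_trans := fun a b c => Quotient.inductionOn₃ a b c fun _ _ _ h1 h2 => ReflTransGen.trans h1 h2
    le_antisymm := fun a b => Quotient.inductionOn₂ a b fun _ _ h1 h2 =>
      Quotient.sound ⟨h1, h2⟩
    le_total := fun a b => Quotient.inductionOn₂ a b fun u v => lsc_total hls hconn u v
    toDecidableLE := fun _ _ => Classical.propDecidable _ }
  let φ := monoEquivOfFin (Quotient s) rfl
  set ℓ := Fintype.card (Quotient s) with hℓ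
  let comp : V → Fin ℓ := fun v => φ.symm (Quotient.mk s v)
  have hle : ∀ u v : V, Quotient.mk s u ≤ Quotient.mk s v ↔ ReflTransGen A u v :=
    fun _ _ => Iff.rfl
  have hcomp_le : ∀ u v : V, comp u ≤ comp v ↔ ReflTransGen A u v := by
    intro u v
    rw [show comp u = φ.symm (Quotient.mk s u) from rfl,
      show comp v = φ.symm (Quotient.mk s v) from rfl, OrderIso.le_iff_le]
    exact hle u v
  have hcomp_eq : ∀ u v : V, comp u = comp v ↔
      (ReflTransGen A u v ∧ ReflTransGen A v u) := by
    intro u v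
    constructor
    · intro h
      exact Quotient.exact (φ.symm.injective h)
    · intro h
      show φ.symm _ = φ.symm _
      rw [Quotient.sound h]
  refine ⟨ℓ, comp, ⟨?_, hcomp_eq, ?_⟩, ?_, ?_, ?_⟩
  · -- surjective
    intro i
    obtain ⟨v, hv⟩ := Quotient.exists_rep (φ i)
    exact ⟨v, by show φ.symm _ = i; rw [hv, OrderIso.symm_apply_apply]⟩
  · -- arcs go forwards
    intro u v h
    exact (hcomp_le u v).2 (ReflTransGen.single h)
  · -- consecutive components dominate
    intro u v hcons
    have hlt : comp u < comp v := by
      rw [Fin.lt_def]; omega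
    have hRuv : ReflTransGen A u v := (hcomp_le u v).1 hlt.le
    have hnRvu : ¬ ReflTransGen A v u := fun h =>
      absurd ((hcomp_le v u).2 h) (not_le_of_gt hlt)
    rcases lsc_cross hRuv with h | ⟨a, b, hab, ⟨hua, hau⟩, hbv, hbu⟩
    · exact absurd h hnRvu
    · have hub : comp u < comp b := by
        refine lt_of_le_of_ne ((hcomp_le u b).2 (hua.tail hab)) fun h => ?_
        exact hbu (((hcomp_eq u b).1 h).2)
      have hbv' : comp b ≤ comp v := (hcomp_le b v).2 hbv
      have hbveq : comp b = comp v := by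
        apply Fin.ext
        rw [Fin.lt_def] at hub
        rw [Fin.le_def] at hbv'
        omega
      have ebv := (hcomp_eq b v).1 hbveq
      have hnRba : ¬ ReflTransGen A b a := fun h => hbu (h.trans hau)
      exact lsc_dom hls hab hnRba hau hua v ebv.1 ebv.2
  · -- every acyclic ordering has ℓ' = ℓ levels
    intro ℓ' comp' ⟨hs', hf', hm'⟩
    have hmono : ∀ {u v : V}, ReflTransGen A u v → comp' u ≤ comp' v := by
      intro u v h
      induction h with
      | refl => exact le_refl _
      | tail _ h ih => exact le_trans ih (hm' _ _ h)
    let ψ : Quotient s → Fin ℓ' := Quotient.lift comp' fun u v h => (hf' u v).2 h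
    have hstrict : StrictMono ψ := by
      intro a b
      refine Quotient.inductionOn₂ a b fun u v h => ?_
      have h1 : comp' u ≤ comp' v := hmono ((hle u v).1 h.le)
      refine lt_of_le_of_ne h1 fun hEq => ?_
      exact absurd (Quotient.sound ((hf' u v).1 hEq)) h.ne
    have hsurj : Function.Surjective ψ := by
      intro i
      obtain ⟨v, hv⟩ := hs' i
      exact ⟨Quotient.mk s v, hv⟩
    have hcard : ℓ = ℓ' := by
      rw [hℓ, ← Fintype.card_fin ℓ']
      exact Fintype.card_congr (hstrict.orderIsoOfSurjective ψ hsurj).toEquiv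
    exact hcard.symm
  · -- uniqueness of the ordering
    intro comp' ⟨hs', hf', hm'⟩
    have hmono : ∀ {u v : V}, ReflTransGen A u v → comp' u ≤ comp' v := by
      intro u v h
      induction h with
      | refl => exact le_refl _
      | tail _ h ih => exact le_trans ih (hm' _ _ h)
    let ψ : Quotient s → Fin ℓ := Quotient.lift comp' fun u v h => (hf' u v).2 h
    have hstrict : StrictMono ψ := by
      intro a b
      refine Quotient.inductionOn₂ a b fun u v h => ?_
      have h1 : comp' u ≤ comp' v := hmono ((hle u v).1 h.le)
      refine lt_of_le_of_ne h1 fun hEq => ?_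
      exact absurd (Quotient.sound ((hf' u v).1 hEq)) h.ne
    have hsurj : Function.Surjective ψ := by
      intro i
      obtain ⟨v, hv⟩ := hs' i
      exact ⟨Quotient.mk s v, hv⟩
    have hiso : hstrict.orderIsoOfSurjective ψ hsurj = φ.symm := Subsingleton.elim _ _
    funext v
    have : ψ (Quotient.mk s v) = φ.symm (Quotient.mk s v) := by
      rw [← hiso, StrictMono.coe_orderIsoOfSurjective]
    exact this
end
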